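/- arXiv:1107.0323 — 5 statements merged into one kernel-verified Lean document; each statement's English description precedes it below -/
import Mathlib

section
/- For every real x > 0 and every positive integer N, the alternating asymptotic bounds e^{−x}·∑_{k=0}^{2N−1} (−1)^k·k!/x^{k+1} < ∫_x^∞ e^{−t}/t dt < e^{−x}·∑_{k=0}^{2N} (−1)^k·k!/x^{k+1} hold. -/
open Real Set Filter MeasureTheory

/-- `E x = ∫_x^∞ e^{-t}/t dt`, so that `Ei(-x) = -E x` for `x > 0`. -/
noncomputable def expInt (x : ℝ) : ℝ := ∫ t in Set.Ioi x, Real.exp (-t) / t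

noncomputable def En (n : ℕ) (x : ℝ) : ℝ := ∫ t in Set.Ioi x, Real.exp (-t) / t ^ n

lemma En_integrableOn (n : ℕ) {x : ℝ} (hx : 0 < x) :
    IntegrableOn (fun t => Real.exp (-t) / t ^ n) (Ioi x) := by
  have hg : IntegrableOn (fun t => Real.exp (-t) / x ^ n) (Ioi x) := by
    have := (exp_neg_integrableOn_Ioi x (one_pos)).div_const (x ^ n)
    simpa [IntegrableOn] using this
  refine Integrable.mono' hg ?_ ?_
  · refine (ContinuousOn.aestronglyMeasurable ?_ measurableSet_Ioi)
    refine ContinuousOn.div (Continuous.continuousOn (by continuity))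
      (continuous_pow n).continuousOn ?_
    intro t ht
    exact pow_ne_zero _ (ne_of_gt (hx.trans ht))
  · filter_upwards [ae_restrict_mem measurableSet_Ioi] with t ht
    have htx : 0 < t := hx.trans ht
    rw [Real.norm_eq_abs, abs_of_nonneg (by positivity)]
    exact div_le_div_of_nonneg_left (Real.exp_pos _).le (by positivity)
      (pow_le_pow_left₀ hx.le (le_of_lt ht) n)

lemma En_pos (n : ℕ) {x : ℝ} (hx : 0 < x) : 0 < En n x := by
  rw [En, setIntegral_pos_iff_support_of_nonneg_ae]
  · have hsub : Ioi x ⊆ (Function.support fun t => Real.exp (-t) / t ^ n) ∩ Ioi x := by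
      intro t ht
      have htx : 0 < t := hx.trans ht
      exact ⟨ne_of_gt (by positivity), ht⟩
    refine lt_of_lt_of_le ?_ (measure_mono hsub)
    rw [Real.volume_Ioi]
    exact ENNReal.zero_lt_top
  · filter_upwards [ae_restrict_mem measurableSet_Ioi] with t ht
    have : 0 < t := hx.trans ht
    positivity
  · exact En_integrableOn n hx

lemma En_rec (n : ℕ) {x : ℝ} (hx : 0 < x) (hn : 1 ≤ n) :
    En n x = Real.exp (-x) / x ^ n - n * En (n + 1) x := by
  obtain ⟨m, rfl⟩ : ∃ m, n = m + 1 := ⟨n - 1, (Nat.succ_pred_eq_of_pos hn).symm⟩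
  have key : ∫ t in Ioi x, (Real.exp (-t) / t ^ (m + 1)
        + (m + 1 : ℕ) * (Real.exp (-t) / t ^ (m + 1 + 1)))
      = 0 - (-(Real.exp (-x) / x ^ (m + 1))) := by
    apply integral_Ioi_of_hasDerivAt_of_tendsto
      (f := fun t => -(Real.exp (-t) / t ^ (m + 1)))
    · apply ContinuousWithinAt.neg
      apply ContinuousWithinAt.div (Continuous.continuousWithinAt (by continuity))
        (continuous_pow _).continuousWithinAt
      exact pow_ne_zero _ hx.ne'
    · intro t ht
      have htx : 0 < t := hx.trans ht
      have h1 : HasDerivAt (fun t : ℝ => Real.exp (-t)) (-Real.exp (-t)) t := by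
        simpa using (hasDerivAt_neg t).exp
      have h2 : HasDerivAt (fun t : ℝ => t ^ (m + 1)) ((m + 1 : ℕ) * t ^ m) t := by
        simpa using hasDerivAt_pow (m + 1) t
      have := (h1.div h2 (pow_ne_zero _ htx.ne')).neg
      convert this using 1
      · rfl
      have ht0 : t ≠ 0 := htx.ne'
      field_simp
      ring
    · exact ((En_integrableOn (m + 1) hx).add
        (((En_integrableOn (m + 1 + 1) hx).const_mul _)))
    · have h : Tendsto (fun t : ℝ => Real.exp t * t ^ (m + 1)) atTop atTop :=
        tendsto_exp_atTop.atTop_mul_atTop₀ (tendsto_pow_atTop (by omega))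
      have := (tendsto_inv_atTop_zero.comp h).neg
      simp only [neg_zero] at this
      convert this using 2 with t
      rw [Function.comp_apply, Real.exp_neg, div_eq_mul_inv, mul_inv]
  rw [integral_add (En_integrableOn (m + 1) hx)
      ((En_integrableOn (m + 1 + 1) hx).const_mul _), integral_const_mul] at key
  have h2 : En (m + 1) x + (m + 1 : ℕ) * En (m + 1 + 1) x = Real.exp (-x) / x ^ (m + 1) := by
    rw [En, En]; linarith [key]
  push_cast at h2 ⊢
  linarith

lemma En_key {x : ℝ} (hx : 0 < x) (m : ℕ) :
    En 1 x = Real.exp (-x) * ∑ k ∈ Finset.range m,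
        (-1 : ℝ) ^ k * (Nat.factorial k : ℝ) / x ^ (k + 1)
      + (-1 : ℝ) ^ m * (Nat.factorial m : ℝ) * En (m + 1) x := by
  induction m with
  | zero => simp
  | succ m ih =>
    rw [ih, En_rec (m + 1) hx (by omega), Finset.sum_range_succ]
    push_cast [Nat.factorial_succ]
    ring

lemma expInt_eq (x : ℝ) : expInt x = En 1 x := by
  simp [expInt, En]

/-- The classical alternating asymptotic enclosure for `-Ei(-x) = ∫_x^∞ e^{-t}/t dt`. -/
theorem expInt_alternating_bounds (x : ℝ) (hx : 0 < x) (N : ℕ) (hN : 0 < N) :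
    Real.exp (-x) * ∑ k ∈ Finset.range (2 * N),
        (-1 : ℝ) ^ k * (Nat.factorial k : ℝ) / x ^ (k + 1) < expInt x ∧
    expInt x < Real.exp (-x) * ∑ k ∈ Finset.range (2 * N + 1),
        (-1 : ℝ) ^ k * (Nat.factorial k : ℝ) / x ^ (k + 1) := by
  constructor
  · have h := En_key hx (2 * N)
    rw [expInt_eq, h, (even_two_mul N).neg_one_pow, one_mul]
    have : 0 < (Nat.factorial (2 * N) : ℝ) * En (2 * N + 1) x :=
      mul_pos (by positivity) (En_pos _ hx)
    linarith
  · have h := En_key hx (2 * N + 1)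
    rw [expInt_eq, h, Odd.neg_one_pow ⟨N, by ring⟩]
    have : 0 < (Nat.factorial (2 * N + 1) : ℝ) * En (2 * N + 1 + 1) x :=
      mul_pos (by positivity) (En_pos _ hx)
    linarith
end

section
/- For every real r ≥ 5/2, the function g(r) := r^{−1}·(e^{−r}·E(2r) − 2·e^{r}·E(4r)) satisfies −e^{−3r}/(8r³) < g(r) < 0, and moreover the finer lower bound g(r) > (e^{−3r}/r³)·(−1/8 + 3/(16r) − 21/(64r²) + 45/(64r³) − 465/(256r⁴)) holds. -/
open Real Set Filter MeasureTheory

/-- `g(r) = r⁻¹ (e^{-r} E(2r) - 2 e^{r} E(4r))`. -/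
noncomputable def gfun (r : ℝ) : ℝ :=
  r⁻¹ * (Real.exp (-r) * expInt (2 * r) - 2 * Real.exp r * expInt (4 * r))


noncomputable def Jfun (m : ℕ) (x : ℝ) : ℝ := ∫ t in Set.Ioi x, Real.exp (-t) / t ^ m

lemma Jfun_integrableOn (m : ℕ) {x : ℝ} (hx : 0 < x) :
    IntegrableOn (fun t => Real.exp (-t) / t ^ m) (Set.Ioi x) := by
  have h1 : IntegrableOn (fun t : ℝ => Real.exp (-t) * (x ^ m)⁻¹) (Set.Ioi x) := by
    have := (exp_neg_integrableOn_Ioi x one_pos).mul_const (x ^ m)⁻¹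
    simp only [neg_one_mul] at this
    exact this
  refine Integrable.mono h1 ?_ ?_
  · refine ContinuousOn.aestronglyMeasurable ?_ measurableSet_Ioi
    exact ContinuousOn.div (Real.continuous_exp.comp continuous_neg).continuousOn
      (continuousOn_pow m)
      (fun t ht => pow_ne_zero _ (ne_of_gt (lt_trans hx ht)))
  · rw [ae_restrict_iff' measurableSet_Ioi]
    filter_upwards with t ht
    have ht0 : 0 < t := lt_trans hx ht
    have hpow : x ^ m ≤ t ^ m := pow_le_pow_left₀ hx.le (le_of_lt ht) m
    have hxm : 0 < x ^ m := pow_pos hx m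
    rw [Real.norm_eq_abs, Real.norm_eq_abs, abs_of_nonneg (by positivity),
      abs_of_nonneg (by positivity), div_eq_mul_inv]
    exact mul_le_mul_of_nonneg_left (inv_anti₀ hxm hpow) (Real.exp_nonneg _)

lemma Jfun_rec (m : ℕ) {x : ℝ} (hx : 0 < x) :
    Jfun m x + m * Jfun (m + 1) x = Real.exp (-x) / x ^ m := by
  have key : ∫ t in Set.Ioi x,
      (Real.exp (-t) / t ^ m + m * (Real.exp (-t) / t ^ (m + 1))) = Real.exp (-x) / x ^ m := by
    have H := integral_Ioi_of_hasDerivAt_of_tendsto'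
      (f := fun t : ℝ => -(Real.exp (-t) * (t ^ m)⁻¹))
      (f' := fun t : ℝ => Real.exp (-t) / t ^ m + m * (Real.exp (-t) / t ^ (m + 1)))
      (a := x) (m := 0)
      ?_ ?_ ?_
    · rw [H, div_eq_mul_inv]; ring
    · intro t ht
      have ht0 : 0 < t := lt_of_lt_of_le hx ht
      have htm : t ^ m ≠ 0 := pow_ne_zero _ (ne_of_gt ht0)
      have h1 : HasDerivAt (fun t : ℝ => Real.exp (-t)) (-Real.exp (-t)) t := by
        exact (hasDerivAt_neg t).exp.congr_deriv (by ring)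
      have h2 : HasDerivAt (fun t : ℝ => (t ^ m)⁻¹) (-(m * t ^ (m - 1)) / (t ^ m) ^ 2) t :=
        (hasDerivAt_pow m t).inv htm
      have h3 := (h1.mul h2).neg
      convert h3 using 1
      · funext s; rfl
      rcases m with _ | k
      · simp
      · have hk : (k + 1) - 1 = k := rfl
        rw [hk]
        have htk : t ^ k ≠ 0 := pow_ne_zero _ (ne_of_gt ht0)
        field_simp
        ring
    · apply (Jfun_integrableOn m hx).add
      exact ((Jfun_integrableOn (m + 1) hx).const_mul _)
    · rw [show (0 : ℝ) = -0 by ring]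
      apply Tendsto.neg
      apply squeeze_zero_norm' (a := fun t : ℝ => Real.exp (-t) * (x ^ m)⁻¹)
      · filter_upwards [eventually_ge_atTop x] with t ht
        have ht0 : 0 < t := lt_of_lt_of_le hx ht
        have hpow : x ^ m ≤ t ^ m := pow_le_pow_left₀ hx.le ht m
        rw [Real.norm_eq_abs, abs_of_nonneg (by positivity)]
        exact mul_le_mul_of_nonneg_left (inv_anti₀ (pow_pos hx m) hpow)
          (Real.exp_nonneg _)
      · rw [show (0 : ℝ) = 0 * (x ^ m)⁻¹ by ring]
        exact (Real.tendsto_exp_neg_atTop_nhds_zero).mul_const _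
  rw [← key, Jfun, Jfun, ← MeasureTheory.integral_const_mul,
    ← MeasureTheory.integral_add (Jfun_integrableOn m hx)
      ((Jfun_integrableOn (m + 1) hx).const_mul _)]

lemma Jfun_mono (m : ℕ) {x : ℝ} (hx : 0 < x) : x * Jfun (m + 1) x ≤ Jfun m x := by
  rw [Jfun, Jfun, ← MeasureTheory.integral_const_mul]
  apply MeasureTheory.setIntegral_mono_on
  · exact (Jfun_integrableOn (m + 1) hx).const_mul _
  · exact Jfun_integrableOn m hx
  · exact measurableSet_Ioi
  · intro t ht
    have ht0 : 0 < t := lt_trans hx ht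
    have hkey : x * (Real.exp (-t) / t ^ (m + 1)) = (x / t) * (Real.exp (-t) / t ^ m) := by
      rw [pow_succ]
      field_simp
    rw [hkey]
    exact mul_le_of_le_one_left (by positivity) ((div_le_one ht0).mpr (le_of_lt ht))

lemma Jfun_lower (m : ℕ) {x : ℝ} (hx : 0 < x) :
    Real.exp (-x) * x / (x ^ m * (x + m)) ≤ Jfun m x := by
  have h1 := Jfun_rec m hx
  have h2 := Jfun_mono m hx
  have hxm : 0 < x ^ m := pow_pos hx m
  have hm : (0 : ℝ) ≤ m := Nat.cast_nonneg m
  rw [eq_div_iff (ne_of_gt hxm)] at h1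
  rw [div_le_iff₀ (by positivity)]
  have h9 : Jfun m x * (x ^ m * (x + m)) - Real.exp (-x) * x =
      (m : ℝ) * x ^ m * (Jfun m x - x * Jfun (m + 1) x) := by
    linear_combination x * h1
  have h10 := mul_nonneg (mul_nonneg hm hxm.le) (sub_nonneg.mpr h2)
  linarith
lemma Jfun_pos (m : ℕ) {x : ℝ} (hx : 0 < x) : 0 < Jfun m x := by
  have hm : (0 : ℝ) ≤ m := Nat.cast_nonneg m
  have h : (0 : ℝ) < Real.exp (-x) * x / (x ^ m * (x + m)) := by positivity
  linarith [Jfun_lower m hx]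

lemma Jfun_upper (m : ℕ) {x : ℝ} (hx : 0 < x) :
    Jfun m x ≤ Real.exp (-x) * (x + 1) / (x ^ m * (x + m + 1)) := by
  have h1 := Jfun_rec m hx
  have h2 := Jfun_lower (m + 1) hx
  push_cast at h2
  have hxm : 0 < x ^ m := pow_pos hx m
  have hxm1 : 0 < x ^ (m + 1) := pow_pos hx (m + 1)
  have hm : (0 : ℝ) ≤ m := Nat.cast_nonneg m
  rw [eq_div_iff (ne_of_gt hxm)] at h1
  rw [div_le_iff₀ (by positivity)] at h2
  rw [le_div_iff₀ (by positivity)]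
  have h7 : x ^ (m + 1) * (Jfun (m + 1) x * (x + 1) - Jfun m x) =
      Jfun (m + 1) x * (x ^ (m + 1) * (x + (m + 1))) - Real.exp (-x) * x := by
    linear_combination (-x) * h1
  have h8 : 0 ≤ Jfun (m + 1) x * (x + 1) - Jfun m x := by
    have h6 : 0 ≤ x ^ (m + 1) * (Jfun (m + 1) x * (x + 1) - Jfun m x) := by
      rw [h7]; linarith
    exact nonneg_of_mul_nonneg_right h6 hxm1
  have h9 : Real.exp (-x) * (x + 1) - Jfun m x * (x ^ m * (x + m + 1)) =
      (m : ℝ) * x ^ m * (Jfun (m + 1) x * (x + 1) - Jfun m x) := by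
    linear_combination (-(x + 1)) * h1
  have h10 := mul_nonneg (mul_nonneg hm hxm.le) h8
  linarith

lemma Jfun_def (m : ℕ) (x : ℝ) : Jfun m x = ∫ t in Set.Ioi x, Real.exp (-t) / t ^ m := rfl

set_option maxHeartbeats 2000000 in
/-- Bounds for `g` on `[5/2, ∞)`: `-e^{-3r}/(8r³) < g(r) < 0`, together with the finer
lower bound `g(r) > (e^{-3r}/r³)(-1/8 + 3/(16r) - 21/(64r²) + 45/(64r³) - 465/(256r⁴))`. -/
theorem gfun_bounds (r : ℝ) (hr : 5 / 2 ≤ r) :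
    -(Real.exp (-3 * r) / (8 * r ^ 3)) < gfun r ∧ gfun r < 0 ∧
    (Real.exp (-3 * r) / r ^ 3) *
        (-(1 / 8) + 3 / (16 * r) - 21 / (64 * r ^ 2) + 45 / (64 * r ^ 3)
          - 465 / (256 * r ^ 4)) < gfun r := by
  have hr0 : (0:ℝ) < r := by linarith
  have hQpos : (0:ℝ) < 150720*r^2 + 299280*r - 1800 := by nlinarith
  have h48 : (0:ℝ) ≤ 48*r^3 - 84*r^2 + 180*r - 465 := by nlinarith
  have hrne : r ≠ 0 := ne_of_gt hr0
  have hx2 : (0:ℝ) < 2 * r := by linarith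
  have hx4 : (0:ℝ) < 4 * r := by linarith
  have hne1 : (2*r+5 : ℝ) ≠ 0 := by positivity
  have hne2 : (4*r+7+1 : ℝ) ≠ 0 := by positivity
  -- the two purely rational inequalities
  have hratio3 : (-1/(8*r^2) + 3/(16*r^3) - 21/(64*r^4) + 45/(64*r^5) - 465/(256*r^6)) < (1/(2*r) - 1/(2*r)^2 + 2/(2*r)^3 - 6/(2*r)^4) + 24*(2*r / ((2*r)^5 * (2*r+5))) - 2*(1/(4*r) - 1/(4*r)^2 + 2/(4*r)^3 - 6/(4*r)^4 + 24/(4*r)^5 - 120/(4*r)^6) - 1440*((4*r+1) / ((4*r)^7 * (4*r+7+1))) := by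
    have hkey : ((1/(2*r) - 1/(2*r)^2 + 2/(2*r)^3 - 6/(2*r)^4) + 24*(2*r / ((2*r)^5 * (2*r+5))) - 2*(1/(4*r) - 1/(4*r)^2 + 2/(4*r)^3 - 6/(4*r)^4 + 24/(4*r)^5 - 120/(4*r)^6) - 1440*((4*r+1) / ((4*r)^7 * (4*r+7+1)))) - (-1/(8*r^2) + 3/(16*r^3) - 21/(64*r^4) + 45/(64*r^5) - 465/(256*r^6)) =
        (150720*r^2 + 299280*r - 1800) / (4096*r^7*(2*r+5)*(4*r+7+1)) := by
      field_simp
      ring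
    have hq : (0:ℝ) < (150720*r^2 + 299280*r - 1800) / (4096*r^7*(2*r+5)*(4*r+7+1)) :=
      div_pos hQpos (by positivity)
    linarith [hkey, hq]
  have hratio2 : (1/(2*r) - 1/(2*r)^2 + 2/(2*r)^3) - 2*(1/(4*r) - 1/(4*r)^2) < 0 := by
    have h : (1/(2*r) - 1/(2*r)^2 + 2/(2*r)^3) - 2*(1/(4*r) - 1/(4*r)^2) = (2 - r)/(8*r^3) := by field_simp; ring
    rw [h]
    exact div_neg_of_neg_of_pos (by linarith) (by positivity)
  have hexp2 : expInt (2 * r) = Jfun 1 (2 * r) := by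
    rw [Jfun_def]; simp only [expInt, pow_one]
  have hexp4 : expInt (4 * r) = Jfun 1 (4 * r) := by
    rw [Jfun_def]; simp only [expInt, pow_one]
  have h21 := Jfun_rec 1 hx2
  have h22 := Jfun_rec 2 hx2
  have h23 := Jfun_rec 3 hx2
  have h24 := Jfun_rec 4 hx2
  have h41 := Jfun_rec 1 hx4
  have h42 := Jfun_rec 2 hx4
  have h43 := Jfun_rec 3 hx4
  have h44 := Jfun_rec 4 hx4
  have h45 := Jfun_rec 5 hx4
  have h46 := Jfun_rec 6 hx4
  push_cast at h21 h22 h23 h24 h41 h42 h43 h44 h45 h46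
  have hJ5 := Jfun_lower 5 hx2
  have hJ7 := Jfun_upper 7 hx4
  have hJ4 := Jfun_pos 4 hx2
  have hJ3 := Jfun_pos 3 hx4
  push_cast at hJ5 hJ7
  have hE2 : Jfun 1 (2*r) = Real.exp (-(2*r)) * (1/(2*r) - 1/(2*r)^2 + 2/(2*r)^3 - 6/(2*r)^4) + 24 * Jfun 5 (2*r) := by
    linear_combination h21 - h22 + 2*h23 - 6*h24
  have hE2' : Jfun 1 (2*r) = Real.exp (-(2*r)) * (1/(2*r) - 1/(2*r)^2 + 2/(2*r)^3) - 6 * Jfun 4 (2*r) := by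
    linear_combination h21 - h22 + 2*h23
  have hE4 : Jfun 1 (4*r) = Real.exp (-(4*r)) * (1/(4*r) - 1/(4*r)^2 + 2/(4*r)^3 - 6/(4*r)^4 + 24/(4*r)^5 - 120/(4*r)^6) + 720 * Jfun 7 (4*r) := by
    linear_combination h41 - h42 + 2*h43 - 6*h44 + 24*h45 - 120*h46
  have hE4' : Jfun 1 (4*r) = Real.exp (-(4*r)) * (1/(4*r) - 1/(4*r)^2) + 2 * Jfun 3 (4*r) := by
    linear_combination h41 - h42
  have eA1 : Real.exp (-r) * Real.exp (-(2*r)) = Real.exp (-(3*r)) := by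
    rw [← Real.exp_add]; ring_nf
  have eA2 : Real.exp r * Real.exp (-(4*r)) = Real.exp (-(3*r)) := by
    rw [← Real.exp_add]; ring_nf
  have hposA : (0:ℝ) < Real.exp (-(3*r)) := Real.exp_pos _
  have e1 : Real.exp (-r) * Jfun 1 (2*r)
      = Real.exp (-(3*r)) * (1/(2*r) - 1/(2*r)^2 + 2/(2*r)^3 - 6/(2*r)^4) + 24 * (Real.exp (-r) * Jfun 5 (2*r)) := by
    rw [hE2]; linear_combination (1/(2*r) - 1/(2*r)^2 + 2/(2*r)^3 - 6/(2*r)^4) * eA1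
  have e1' : Real.exp (-r) * Jfun 1 (2*r)
      = Real.exp (-(3*r)) * (1/(2*r) - 1/(2*r)^2 + 2/(2*r)^3) - 6 * (Real.exp (-r) * Jfun 4 (2*r)) := by
    rw [hE2']; linear_combination (1/(2*r) - 1/(2*r)^2 + 2/(2*r)^3) * eA1
  have e2 : Real.exp r * Jfun 1 (4*r)
      = Real.exp (-(3*r)) * (1/(4*r) - 1/(4*r)^2 + 2/(4*r)^3 - 6/(4*r)^4 + 24/(4*r)^5 - 120/(4*r)^6) + 720 * (Real.exp r * Jfun 7 (4*r)) := by
    rw [hE4]; linear_combination (1/(4*r) - 1/(4*r)^2 + 2/(4*r)^3 - 6/(4*r)^4 + 24/(4*r)^5 - 120/(4*r)^6) * eA2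
  have e2' : Real.exp r * Jfun 1 (4*r)
      = Real.exp (-(3*r)) * (1/(4*r) - 1/(4*r)^2) + 2 * (Real.exp r * Jfun 3 (4*r)) := by
    rw [hE4']; linear_combination (1/(4*r) - 1/(4*r)^2) * eA2
  have hJ5' : Real.exp (-(3*r)) * (2*r / ((2*r)^5 * (2*r+5))) ≤ Real.exp (-r) * Jfun 5 (2*r) := by
    have h := mul_le_mul_of_nonneg_left hJ5 (Real.exp_pos (-r)).le
    have heq : Real.exp (-(3*r)) * (2*r / ((2*r)^5 * (2*r+5)))
        = Real.exp (-r) * (Real.exp (-(2*r)) * (2*r) / ((2*r)^5 * (2*r+5))) := by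
      rw [← eA1]; ring
    linarith [heq, h]
  have hJ7' : Real.exp r * Jfun 7 (4*r) ≤ Real.exp (-(3*r)) * ((4*r+1) / ((4*r)^7 * (4*r+7+1))) := by
    have h := mul_le_mul_of_nonneg_left hJ7 (Real.exp_pos r).le
    have heq : Real.exp (-(3*r)) * ((4*r+1) / ((4*r)^7 * (4*r+7+1)))
        = Real.exp r * (Real.exp (-(4*r)) * (4*r+1) / ((4*r)^7 * (4*r+7+1))) := by
      rw [← eA2]; ring
    linarith [heq, h]
  have hJ4' : (0:ℝ) < Real.exp (-r) * Jfun 4 (2*r) := mul_pos (Real.exp_pos _) hJ4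
  have hJ3' : (0:ℝ) < Real.exp r * Jfun 3 (4*r) := mul_pos (Real.exp_pos _) hJ3
  have hcomb3 := mul_lt_mul_of_pos_left hratio3 hposA
  have hdist3 : Real.exp (-(3*r)) * ((1/(2*r) - 1/(2*r)^2 + 2/(2*r)^3 - 6/(2*r)^4) + 24*(2*r / ((2*r)^5 * (2*r+5))) - 2*(1/(4*r) - 1/(4*r)^2 + 2/(4*r)^3 - 6/(4*r)^4 + 24/(4*r)^5 - 120/(4*r)^6) - 1440*((4*r+1) / ((4*r)^7 * (4*r+7+1))))
      = Real.exp (-(3*r))*(1/(2*r) - 1/(2*r)^2 + 2/(2*r)^3 - 6/(2*r)^4) + 24*(Real.exp (-(3*r))*(2*r / ((2*r)^5 * (2*r+5)))) - 2*(Real.exp (-(3*r))*(1/(4*r) - 1/(4*r)^2 + 2/(4*r)^3 - 6/(4*r)^4 + 24/(4*r)^5 - 120/(4*r)^6))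
        - 1440*(Real.exp (-(3*r))*((4*r+1) / ((4*r)^7 * (4*r+7+1)))) := by ring
  have hDlow : Real.exp (-(3*r)) * (-1/(8*r^2) + 3/(16*r^3) - 21/(64*r^4) + 45/(64*r^5) - 465/(256*r^6)) <
      Real.exp (-r) * Jfun 1 (2*r) - 2 * Real.exp r * Jfun 1 (4*r) := by
    linarith [hcomb3, hdist3, hJ5', hJ7', e1, e2]
  have hcomb2 := mul_neg_of_pos_of_neg hposA hratio2
  have hdist2 : Real.exp (-(3*r)) * ((1/(2*r) - 1/(2*r)^2 + 2/(2*r)^3) - 2*(1/(4*r) - 1/(4*r)^2))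
      = Real.exp (-(3*r))*(1/(2*r) - 1/(2*r)^2 + 2/(2*r)^3) - 2*(Real.exp (-(3*r))*(1/(4*r) - 1/(4*r)^2)) := by ring
  have hDup : Real.exp (-r) * Jfun 1 (2*r) - 2 * Real.exp r * Jfun 1 (4*r) < 0 := by
    linarith [hcomb2, hdist2, e1', e2', hJ4', hJ3']
  have hg : gfun r = r⁻¹ * (Real.exp (-r) * Jfun 1 (2*r)
      - 2 * Real.exp r * Jfun 1 (4*r)) := by
    rw [gfun, hexp2, hexp4]
  have hinv : (0:ℝ) < r⁻¹ := inv_pos.mpr hr0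
  have ineq2 : gfun r < 0 := by
    rw [hg]; exact mul_neg_of_pos_of_neg hinv hDup
  have ineq3 : (Real.exp (-3 * r) / r ^ 3) *
      (-(1 / 8) + 3 / (16 * r) - 21 / (64 * r ^ 2) + 45 / (64 * r ^ 3)
        - 465 / (256 * r ^ 4)) < gfun r := by
    have hT3 : (Real.exp (-3 * r) / r ^ 3) *
        (-(1 / 8) + 3 / (16 * r) - 21 / (64 * r ^ 2) + 45 / (64 * r ^ 3)
          - 465 / (256 * r ^ 4)) = r⁻¹ * (Real.exp (-(3*r)) * (-1/(8*r^2) + 3/(16*r^3) - 21/(64*r^4) + 45/(64*r^5) - 465/(256*r^6))) := by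
      rw [show (-3 * r : ℝ) = -(3*r) by ring]
      field_simp
    rw [hg, hT3]
    exact mul_lt_mul_of_pos_left hDlow hinv
  refine ⟨?_, ineq2, ineq3⟩
  have hA3 : (0:ℝ) < Real.exp (-3 * r) / r ^ 3 := by positivity
  have hB : -(1/8 : ℝ) ≤ -(1 / 8) + 3 / (16 * r) - 21 / (64 * r ^ 2) + 45 / (64 * r ^ 3)
      - 465 / (256 * r ^ 4) := by
    have hq : (-(1 / 8) + 3 / (16 * r) - 21 / (64 * r ^ 2) + 45 / (64 * r ^ 3)
        - 465 / (256 * r ^ 4)) - (-(1/8 : ℝ))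
        = (48*r^3 - 84*r^2 + 180*r - 465)/(256*r^4) := by
      field_simp; ring
    have h2 := div_nonneg h48 (by positivity : (0:ℝ) ≤ 256*r^4)
    linarith [hq]
  calc -(Real.exp (-3 * r) / (8 * r ^ 3))
      = (Real.exp (-3 * r) / r ^ 3) * (-(1/8)) := by ring
    _ ≤ (Real.exp (-3 * r) / r ^ 3) *
        (-(1 / 8) + 3 / (16 * r) - 21 / (64 * r ^ 2) + 45 / (64 * r ^ 3)
          - 465 / (256 * r ^ 4)) := mul_le_mul_of_nonneg_left hB hA3.le
    _ < gfun r := ineq3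
end

section
/- For every real r ≥ 5/2, one has |∫_r^∞ sinh(r−s)·s^{−2}·e^{−3s} ds| ≤ e^{−r}/8900; that is, the function N(e^{−·})(r) := ∫_r^∞ sinh(r−s)·s^{−2}·e^{−3s} ds satisfies sup_{r≥5/2} e^{r}·|N(e^{−·})(r)| ≤ 1/8900. -/
open Real Set Filter MeasureTheory Topology

set_option maxHeartbeats 1000000 in
/-- The Volterra-type integral `N(e^{-·})(r) = ∫_r^∞ sinh(r-s) s^{-2} e^{-3s} ds` satisfies
`sup_{r ≥ 5/2} e^{r} |N(e^{-·})(r)| ≤ 1/8900`, i.e. `|N(e^{-·})(r)| ≤ e^{-r}/8900` for all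
`r ≥ 5/2`. -/
theorem volterra_exp_bound (r : ℝ) (hr : 5 / 2 ≤ r) :
    |∫ s in Set.Ioi r, Real.sinh (r - s) / s ^ 2 * Real.exp (-3 * s)| ≤
      Real.exp (-r) / 8900 := by
  have hr0 : (0:ℝ) < r := by linarith
  set f : ℝ → ℝ := fun s => Real.sinh (r - s) / s ^ 2 * Real.exp (-3 * s) with hf
  set φ : ℝ → ℝ := fun s => Real.sinh (s - r) * Real.exp (-3 * s) with hφ
  have hφc : Continuous φ :=
    (Real.continuous_sinh.comp (continuous_id.sub continuous_const)).mul
      (Real.continuous_exp.comp (continuous_const.mul continuous_id))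
  have hnorm : ∀ s ∈ Ioi r, |f s| = Real.sinh (s - r) / s ^ 2 * Real.exp (-3 * s) := by
    intro s hs
    have hs' : r < s := hs
    have h1 : |Real.sinh (r - s)| = Real.sinh (s - r) := by
      rw [Real.abs_sinh, abs_of_nonpos (by linarith), neg_sub]
    rw [hf, abs_mul, abs_div, abs_of_pos (Real.exp_pos _), h1,
      abs_of_pos (pow_pos (lt_trans hr0 hs') 2)]
  have hmeas : AEStronglyMeasurable f (volume.restrict (Ioi r)) :=
    (((Real.measurable_sinh.comp (measurable_const.sub measurable_id)).div
      (measurable_id.pow_const 2)).mul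
      (Real.measurable_exp.comp (measurable_id.const_mul (-3)))).aestronglyMeasurable
  have hsinh_le : ∀ x : ℝ, Real.sinh x ≤ Real.exp x / 2 := by
    intro x
    rw [Real.sinh_eq]
    have := Real.exp_pos (-x)
    linarith
  have hbound : ∀ s ∈ Ioi r, |f s| ≤ Real.exp (-(2 * s)) := by
    intro s hs
    have hs' : r < s := hs
    have hs1 : (1:ℝ) ≤ s ^ 2 := by nlinarith
    have hsh : 0 ≤ Real.sinh (s - r) := Real.sinh_nonneg_iff.2 (by linarith)
    rw [hnorm s hs]
    have h2 : Real.sinh (s - r) / s ^ 2 ≤ Real.exp (s - r) / 2 :=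
      le_trans (by
        rw [div_le_iff₀ (by positivity : (0:ℝ) < s ^ 2)]
        nlinarith) (hsinh_le _)
    have h3 : Real.exp (s - r) / 2 * Real.exp (-3 * s) ≤ Real.exp (-(2 * s)) := by
      rw [div_mul_eq_mul_div, ← Real.exp_add]
      have h4 : Real.exp (s - r + -3 * s) ≤ Real.exp (-(2 * s)) :=
        Real.exp_le_exp.2 (by linarith)
      have := Real.exp_pos (s - r + -3 * s)
      linarith [Real.exp_pos (-(2 * s))]
    calc Real.sinh (s - r) / s ^ 2 * Real.exp (-3 * s)
        ≤ Real.exp (s - r) / 2 * Real.exp (-3 * s) :=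
          mul_le_mul_of_nonneg_right h2 (Real.exp_pos _).le
      _ ≤ Real.exp (-(2 * s)) := h3
  have hint : IntegrableOn f (Ioi r) := by
    apply Integrable.mono' (exp_neg_integrableOn_Ioi r (by norm_num : (0:ℝ) < 2)) hmeas
    filter_upwards [ae_restrict_mem measurableSet_Ioi] with s hs
    simpa [Real.norm_eq_abs, neg_mul] using hbound s hs
  have hintg : IntegrableOn (fun s => |f s|) (Ioi r) := hint.abs
  -- FTC evaluation of ∫ φ over Ioc
  have hH : ∀ a b : ℝ, a ≤ b → ∫ s in Ioc a b, φ s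
      = (-Real.exp (-r - 2*b)/4 + Real.exp (r - 4*b)/8)
        - (-Real.exp (-r - 2*a)/4 + Real.exp (r - 4*a)/8) := by
    intro a b hab
    rw [← intervalIntegral.integral_of_le hab]
    apply intervalIntegral.integral_eq_sub_of_hasDerivAt
    · intro s _
      have hlin1 : HasDerivAt (fun x : ℝ => -r - 2 * x) (-2) s := by
        simpa using ((hasDerivAt_id s).const_mul (2:ℝ)).const_sub (-r)
      have hlin2 : HasDerivAt (fun x : ℝ => r - 4 * x) (-4) s := by
        simpa using ((hasDerivAt_id s).const_mul (4:ℝ)).const_sub r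
      have d := ((hlin1.exp.div_const 4).neg.add (hlin2.exp.div_const 8))
      convert d using 1
      · funext x; simp only [Pi.add_apply, Pi.neg_apply]; ring
      · have e1 : Real.exp (-r - 2*s) = Real.exp (s - r) * Real.exp (-3*s) := by
          rw [← Real.exp_add]; ring_nf
        have e2 : Real.exp (r - 4*s) = Real.exp (r - s) * Real.exp (-3*s) := by
          rw [← Real.exp_add]; ring_nf
        rw [hφ]
        show Real.sinh (s - r) * Real.exp (-3*s) = _
        rw [Real.sinh_eq, show -(s-r) = r - s by ring, e1, e2]; ring
    · exact hφc.intervalIntegrable a b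
  -- tail integral of exp(-2s)
  have htail : ∀ c : ℝ, ∫ s in Ioi c, Real.exp (-(2*s)) = Real.exp (-(2*c))/2 := by
    intro c
    have hder : ∀ s ∈ Ici c,
        HasDerivAt (fun x : ℝ => -(Real.exp (-(2*x))/2)) (Real.exp (-(2*s))) s := by
      intro s _
      have hlin : HasDerivAt (fun x : ℝ => -(2*x)) (-2) s := by
        simpa using ((hasDerivAt_id s).const_mul (2:ℝ)).fun_neg
      have h := (hlin.exp.div_const 2).fun_neg
      exact h.congr_deriv (by ring)
    have hint2 : IntegrableOn (fun s => Real.exp (-(2*s))) (Ioi c) := by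
      have := exp_neg_integrableOn_Ioi c (by norm_num : (0:ℝ) < 2)
      simpa [neg_mul] using this
    have htend : Tendsto (fun x : ℝ => -(Real.exp (-(2*x))/2)) atTop (𝓝 0) := by
      have h1 : Tendsto (fun x : ℝ => 2*x) atTop atTop :=
        Tendsto.const_mul_atTop (by norm_num) tendsto_id
      have h2 : Tendsto (fun x : ℝ => -(2*x)) atTop atBot := tendsto_neg_atTop_atBot.comp h1
      have h3 : Tendsto (fun x : ℝ => Real.exp (-(2*x))) atTop (𝓝 0) :=
        Real.tendsto_exp_atBot.comp h2
      have := (h3.div_const 2).neg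
      simpa using this
    rw [integral_Ioi_of_hasDerivAt_of_tendsto' hder hint2 htend]
    ring
  -- splitting of the domain
  have hs1 : Ioc r (r+1/2) ∪ Ioi (r+1/2) = Ioi r := Ioc_union_Ioi_eq_Ioi (by linarith)
  have hs2 : Ioc (r+1/2) (r+1) ∪ Ioi (r+1) = Ioi (r+1/2) := Ioc_union_Ioi_eq_Ioi (by linarith)
  have hd1 : Disjoint (Ioc r (r+1/2)) (Ioi (r+1/2)) := by
    rw [Set.disjoint_left]; rintro x ⟨_, hx2⟩ hx3; exact absurd hx3 (not_lt.2 hx2)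
  have hd2 : Disjoint (Ioc (r+1/2) (r+1)) (Ioi (r+1)) := by
    rw [Set.disjoint_left]; rintro x ⟨_, hx2⟩ hx3; exact absurd hx3 (not_lt.2 hx2)
  have hsub1 : Ioc r (r+1/2) ⊆ Ioi r := fun x hx => hx.1
  have hsub2 : Ioi (r+1/2) ⊆ Ioi r := Ioi_subset_Ioi (by linarith)
  have hsub3 : Ioc (r+1/2) (r+1) ⊆ Ioi r := fun x hx => lt_trans (by linarith) hx.1
  have hsub4 : Ioi (r+1) ⊆ Ioi r := Ioi_subset_Ioi (by linarith)
  have hsplit : ∫ s in Ioi r, |f s|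
      = (∫ s in Ioc r (r+1/2), |f s|) + ((∫ s in Ioc (r+1/2) (r+1), |f s|)
        + ∫ s in Ioi (r+1), |f s|) := by
    rw [← hs1, setIntegral_union hd1 measurableSet_Ioi (hintg.mono_set hsub1)
      (hintg.mono_set hsub2), ← hs2,
      setIntegral_union hd2 measurableSet_Ioi (hintg.mono_set hsub3)
      (hintg.mono_set hsub4)]
  -- piece 1 bound
  have hb1 : ∫ s in Ioc r (r+1/2), |f s| ≤ (4/25) * ∫ s in Ioc r (r+1/2), φ s := by
    rw [← integral_const_mul]
    apply setIntegral_mono_on (hintg.mono_set hsub1)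
      ((continuous_const.mul hφc).integrableOn_Ioc) measurableSet_Ioc
    intro s hs
    have hsr : r < s := hs.1
    have hs2' : (25:ℝ)/4 ≤ s ^ 2 := by nlinarith
    have hsh : 0 ≤ Real.sinh (s - r) := Real.sinh_nonneg_iff.2 (by linarith)
    rw [hnorm s hsr]
    have : Real.sinh (s - r) / s ^ 2 ≤ (4/25) * Real.sinh (s - r) := by
      rw [div_le_iff₀ (by positivity : (0:ℝ) < s ^ 2)]
      nlinarith
    calc Real.sinh (s - r) / s ^ 2 * Real.exp (-3*s)
        ≤ (4/25) * Real.sinh (s - r) * Real.exp (-3*s) :=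
          mul_le_mul_of_nonneg_right this (Real.exp_pos _).le
      _ = (4/25) * φ s := by rw [hφ]; ring
  -- piece 2 bound
  have hb2 : ∫ s in Ioc (r+1/2) (r+1), |f s| ≤ (1/9) * ∫ s in Ioc (r+1/2) (r+1), φ s := by
    rw [← integral_const_mul]
    apply setIntegral_mono_on (hintg.mono_set hsub3)
      ((continuous_const.mul hφc).integrableOn_Ioc) measurableSet_Ioc
    intro s hs
    have hsr : r < s := lt_trans (by linarith) hs.1
    have hsr' : r + 1/2 < s := hs.1
    have hs2' : (9:ℝ) ≤ s ^ 2 := by nlinarith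
    have hsh : 0 ≤ Real.sinh (s - r) := Real.sinh_nonneg_iff.2 (by linarith)
    rw [hnorm s hsr]
    have : Real.sinh (s - r) / s ^ 2 ≤ (1/9) * Real.sinh (s - r) := by
      rw [div_le_iff₀ (by positivity : (0:ℝ) < s ^ 2)]
      nlinarith
    calc Real.sinh (s - r) / s ^ 2 * Real.exp (-3*s)
        ≤ (1/9) * Real.sinh (s - r) * Real.exp (-3*s) :=
          mul_le_mul_of_nonneg_right this (Real.exp_pos _).le
      _ = (1/9) * φ s := by rw [hφ]; ring
  -- piece 3 (tail) bound
  have hb3 : ∫ s in Ioi (r+1), |f s|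
      ≤ (2/49) * Real.exp (-r) * (Real.exp (-(2*(r+1)))/2) := by
    have hmono : ∫ s in Ioi (r+1), |f s|
        ≤ ∫ s in Ioi (r+1), (2/49) * Real.exp (-r) * Real.exp (-(2*s)) := by
      apply setIntegral_mono_on (hintg.mono_set hsub4) _ measurableSet_Ioi
      · intro s hs
        have hsr1 : r + 1 < s := hs
        have hsr : r < s := by linarith
        have hs2' : (49:ℝ)/4 ≤ s ^ 2 := by nlinarith
        have hsh : 0 ≤ Real.sinh (s - r) := Real.sinh_nonneg_iff.2 (by linarith)
        rw [hnorm s hsr]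
        have h2 : Real.sinh (s - r) / s ^ 2 ≤ (2/49) * Real.exp (s - r) := by
          have := hsinh_le (s - r)
          rw [div_le_iff₀ (by positivity : (0:ℝ) < s ^ 2)]
          nlinarith [Real.exp_pos (s - r)]
        calc Real.sinh (s - r) / s ^ 2 * Real.exp (-3*s)
            ≤ (2/49) * Real.exp (s - r) * Real.exp (-3*s) :=
              mul_le_mul_of_nonneg_right h2 (Real.exp_pos _).le
          _ = (2/49) * Real.exp (-r) * Real.exp (-(2*s)) := by
              rw [mul_assoc, ← Real.exp_add, mul_assoc, ← Real.exp_add]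
              ring_nf
      · have := exp_neg_integrableOn_Ioi (r+1) (by norm_num : (0:ℝ) < 2)
        have h' : IntegrableOn (fun s => Real.exp (-(2*s))) (Ioi (r+1)) := by
          simpa [neg_mul] using this
        exact h'.const_mul _
    rw [integral_const_mul, htail (r+1)] at hmono
    exact hmono
  -- assemble
  have habs : |∫ s in Ioi r, f s| ≤ ∫ s in Ioi r, |f s| := by
    simpa [Real.norm_eq_abs] using
      norm_integral_le_integral_norm (μ := volume.restrict (Ioi r)) f
  have hnum : (4/25)*((-Real.exp (-r - 2*(r+1/2))/4 + Real.exp (r - 4*(r+1/2))/8)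
        - (-Real.exp (-r - 2*r)/4 + Real.exp (r - 4*r)/8))
      + ((1/9)*((-Real.exp (-r - 2*(r+1))/4 + Real.exp (r - 4*(r+1))/8)
        - (-Real.exp (-r - 2*(r+1/2))/4 + Real.exp (r - 4*(r+1/2))/8))
      + (2/49)*Real.exp (-r)*(Real.exp (-(2*(r+1)))/2))
        ≤ Real.exp (-r)/8900 := by
    set p := Real.exp (-r) with hp
    set b := Real.exp (-1) with hb
    have hp0 : 0 < p := Real.exp_pos _
    have hb0 : 0 < b := Real.exp_pos _
    have key3 : ∀ c : ℝ, Real.exp (-3*r + c) = p^3 * Real.exp c := by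
      intro c
      rw [show -3*r + c = (-r) + ((-r) + ((-r) + c)) by ring,
        Real.exp_add, Real.exp_add, Real.exp_add, hp]; ring
    have e1 : Real.exp (-r - 2*(r+1/2)) = p^3 * b := by
      rw [show -r - 2*(r+1/2) = -3*r + (-1) by ring, key3, hb]
    have e2 : Real.exp (r - 4*(r+1/2)) = p^3 * b^2 := by
      rw [show r - 4*(r+1/2) = -3*r + (-1 + -1) by ring, key3, Real.exp_add, hb]; ring
    have e3 : Real.exp (-r - 2*r) = p^3 := by
      rw [show -r - 2*r = -3*r + 0 by ring, key3, Real.exp_zero]; ring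
    have e4 : Real.exp (r - 4*r) = p^3 := by
      rw [show r - 4*r = -3*r + 0 by ring, key3, Real.exp_zero]; ring
    have e5 : Real.exp (-r - 2*(r+1)) = p^3 * b^2 := by
      rw [show -r - 2*(r+1) = -3*r + (-1 + -1) by ring, key3, Real.exp_add, hb]; ring
    have e6 : Real.exp (r - 4*(r+1)) = p^3 * b^4 := by
      rw [show r - 4*(r+1) = -3*r + (-1 + (-1 + (-1 + -1))) by ring, key3,
        Real.exp_add, Real.exp_add, Real.exp_add, hb]; ring
    have e7 : Real.exp (-(2*(r+1))) = p^2 * b^2 := by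
      rw [show -(2*(r+1)) = (-r) + ((-r) + (-1 + -1)) by ring,
        Real.exp_add, Real.exp_add, Real.exp_add, hp, hb]; ring
    rw [e1, e2, e3, e4, e5, e6, e7]
    have hbu : b ≤ 0.37 := by
      rw [hb, Real.exp_neg]
      have h2 : (2.71:ℝ) ≤ Real.exp 1 := le_of_lt (lt_trans (by norm_num) Real.exp_one_gt_d9)
      calc (Real.exp 1)⁻¹ ≤ (2.71:ℝ)⁻¹ := by
            apply inv_anti₀ (by norm_num) h2
        _ ≤ 0.37 := by norm_num
    have hbl : 0.367 ≤ b := by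
      rw [hb, Real.exp_neg]
      have h3 : Real.exp 1 ≤ 2.72 := le_of_lt (lt_trans Real.exp_one_lt_d9 (by norm_num))
      calc (0.367:ℝ) ≤ (2.72:ℝ)⁻¹ := by norm_num
        _ ≤ (Real.exp 1)⁻¹ := inv_anti₀ (Real.exp_pos 1) h3
    have hp2 : p^2 ≤ b^5 := by
      have h1 : p^2 = Real.exp (-r + -r) := by rw [Real.exp_add, hp]; ring
      have h2 : b^5 = Real.exp (-1 + (-1 + (-1 + (-1 + -1)))) := by
        rw [Real.exp_add, Real.exp_add, Real.exp_add, Real.exp_add, hb]; ring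
      rw [h1, h2]
      exact Real.exp_le_exp.2 (by linarith)
    have hb2u : b^2 ≤ 0.1369 := by nlinarith
    have hb2l : 0.134689 ≤ b^2 := by nlinarith
    have hb4u : b^4 ≤ 0.01874161 := by nlinarith
    have hb5u : b^5 ≤ 0.0069344 := by nlinarith
    have key : p^3 * ((4/25)*(1/8 - b/4 + b^2/8) + (1/9)*(b/4 - 3*b^2/8 + b^4/8) + b^2/49)
        ≤ p/8900 := by
      have hCb : (4/25)*(1/8 - b/4 + b^2/8) + (1/9)*(b/4 - 3*b^2/8 + b^4/8) + b^2/49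
          ≤ 0.0157 := by nlinarith
      calc p^3 * ((4/25)*(1/8 - b/4 + b^2/8) + (1/9)*(b/4 - 3*b^2/8 + b^4/8) + b^2/49)
          ≤ p^3 * 0.0157 := mul_le_mul_of_nonneg_left hCb (pow_nonneg hp0.le 3)
        _ = p * (p^2 * 0.0157) := by ring
        _ ≤ p * (b^5 * 0.0157) :=
            mul_le_mul_of_nonneg_left (mul_le_mul_of_nonneg_right hp2 (by norm_num)) hp0.le
        _ ≤ p * (1/8900) := mul_le_mul_of_nonneg_left (by nlinarith) hp0.le
        _ = p/8900 := by ring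
    linarith [key]
  calc |∫ s in Ioi r, f s| ≤ ∫ s in Ioi r, |f s| := habs
    _ = (∫ s in Ioc r (r+1/2), |f s|) + ((∫ s in Ioc (r+1/2) (r+1), |f s|)
        + ∫ s in Ioi (r+1), |f s|) := hsplit
    _ ≤ (4/25) * (∫ s in Ioc r (r+1/2), φ s) + ((1/9) * (∫ s in Ioc (r+1/2) (r+1), φ s)
        + (2/49) * Real.exp (-r) * (Real.exp (-(2*(r+1)))/2)) := by
        exact add_le_add hb1 (add_le_add hb2 hb3)
    _ ≤ Real.exp (-r)/8900 := by
        rw [hH r (r+1/2) (by linarith), hH (r+1/2) (r+1) (by linarith)]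
        exact hnum
end

section
/- For every real r > 0, the identity ∫_r^∞ sinh(r−s)·s^{−2}·e^{−3s} ds = e^{−r}·E(2r) − 2·e^{r}·E(4r) holds; equivalently, r·g(r) equals the integral on the left-hand side. -/
open Real Set Filter MeasureTheory

lemma integrable_aux (a r : ℝ) (ha : 0 < a) (hr : 0 < r) (n : ℕ) :
    IntegrableOn (fun s => Real.exp (-(a * s)) / s ^ n) (Set.Ioi r) := by
  apply Integrable.mono' ((exp_neg_integrableOn_Ioi r ha).mul_const ((r ^ n)⁻¹))
  · apply Measurable.aestronglyMeasurable
    exact (Real.measurable_exp.comp (measurable_id.const_mul a).neg).div (measurable_id.pow_const n)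
  · filter_upwards [ae_restrict_mem measurableSet_Ioi] with s hs
    have hs' : r < s := hs
    have h0 : (0:ℝ) < s := hr.trans hs'
    rw [Real.norm_eq_abs, abs_of_nonneg (by positivity), ← neg_mul, div_eq_mul_inv]
    gcongr

lemma expInt_eq_s8 (a r : ℝ) (ha : 0 < a) (hr : 0 < r) :
    expInt (a * r) = ∫ s in Set.Ioi r, Real.exp (-(a * s)) / s := by
  have h := integral_comp_mul_left_Ioi (fun t => Real.exp (-t) / t) r ha
  rw [smul_eq_mul] at h
  beta_reduce at h
  have h2 : expInt (a * r) = a * ∫ x in Set.Ioi r, Real.exp (-(a * x)) / (a * x) := by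
    rw [expInt, h]
    field_simp
  rw [h2, ← MeasureTheory.integral_const_mul]
  apply setIntegral_congr_fun measurableSet_Ioi
  intro s hs
  have h0 : (0:ℝ) < s := hr.trans hs
  field_simp

lemma parts_eq (a r : ℝ) (ha : 0 < a) (hr : 0 < r) :
    ∫ s in Set.Ioi r, (a * Real.exp (-(a * s)) / s + Real.exp (-(a * s)) / s ^ 2)
      = Real.exp (-(a * r)) / r := by
  have key : ∫ s in Set.Ioi r,
      (a * Real.exp (-(a * s)) / s + Real.exp (-(a * s)) / s ^ 2)
      = 0 - (-Real.exp (-(a * r)) / r) := by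
    apply integral_Ioi_of_hasDerivAt_of_tendsto
      (f := fun s => -Real.exp (-(a * s)) / s)
    · apply ContinuousWithinAt.div
      · exact (Real.continuous_exp.comp ((continuous_const.mul continuous_id).neg)).neg.continuousWithinAt
      · exact continuousWithinAt_id
      · exact ne_of_gt hr
    · intro s hs
      have h0 : (0:ℝ) < s := hr.trans hs
      have hlin : HasDerivAt (fun s : ℝ => -(a * s)) (-a) s := by
        exact (((hasDerivAt_id s).const_mul a).neg).congr_deriv (by ring)
      have h1 : HasDerivAt (fun s : ℝ => -Real.exp (-(a * s))) (a * Real.exp (-(a * s))) s := by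
        have := ((Real.hasDerivAt_exp (-(a * s))).comp s hlin).neg
        exact this.congr_deriv (by ring)
      have h2 : HasDerivAt (fun s : ℝ => s⁻¹) (-(s ^ 2)⁻¹) s := by
        simpa using hasDerivAt_inv (ne_of_gt h0)
      have H := h1.mul h2
      simp only [div_eq_mul_inv]
      exact H.congr_deriv (by ring)
    · have h1 := integrable_aux a r ha hr 1
      have h2 := integrable_aux a r ha hr 2
      have := (h1.const_mul a).add h2
      simp only [pow_one, mul_div_assoc] at this ⊢
      exact this
    · have h1 : Tendsto (fun s : ℝ => Real.exp (-(a * s))) atTop (nhds 0) := by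
        apply Real.tendsto_exp_atBot.comp
        exact tendsto_neg_atBot_iff.mpr (tendsto_id.const_mul_atTop ha)
      have h2 : Tendsto (fun s : ℝ => s⁻¹) atTop (nhds 0) := tendsto_inv_atTop_zero
      have := (h1.mul h2).neg
      simpa [div_eq_mul_inv, neg_mul] using this
  rw [key]
  ring

/-- For every `r > 0`, `∫_r^∞ sinh(r-s) s^{-2} e^{-3s} ds = e^{-r} E(2r) - 2 e^{r} E(4r)`,
i.e. the left-hand side equals `r g(r)` with `g(r) = r⁻¹(e^{-r} E(2r) - 2 e^{r} E(4r))`. -/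
theorem volterra_exp_eq (r : ℝ) (hr : 0 < r) :
    ∫ s in Set.Ioi r, Real.sinh (r - s) / s ^ 2 * Real.exp (-3 * s) =
      Real.exp (-r) * expInt (2 * r) - 2 * Real.exp r * expInt (4 * r) := by
  have i2 := integrable_aux 2 r two_pos hr 2
  have i2' := integrable_aux 4 r four_pos hr 2
  have I2 : ∀ a : ℝ, 0 < a → ∫ s in Set.Ioi r, Real.exp (-(a * s)) / s ^ 2
      = Real.exp (-(a * r)) / r - a * expInt (a * r) := by
    intro a ha
    have hP := parts_eq a r ha hr
    have hadd : ∫ s in Set.Ioi r,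
        (a * Real.exp (-(a * s)) / s + Real.exp (-(a * s)) / s ^ 2)
        = (∫ s in Set.Ioi r, a * Real.exp (-(a * s)) / s)
          + ∫ s in Set.Ioi r, Real.exp (-(a * s)) / s ^ 2 := by
      apply integral_add _ (integrable_aux a r ha hr 2)
      simpa [pow_one, mul_div_assoc] using (integrable_aux a r ha hr 1).const_mul a
    have hmul : (∫ s in Set.Ioi r, a * Real.exp (-(a * s)) / s)
        = a * ∫ s in Set.Ioi r, Real.exp (-(a * s)) / s := by
      rw [← MeasureTheory.integral_const_mul]
      congr 1
      funext s
      ring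
    rw [hadd, hmul, ← expInt_eq_s8 a r ha hr] at hP
    linarith
  have E2 := I2 2 two_pos
  have E4 := I2 4 four_pos
  have hcong : ∫ s in Set.Ioi r, Real.sinh (r - s) / s ^ 2 * Real.exp (-3 * s)
      = ∫ s in Set.Ioi r, (Real.exp r / 2 * (Real.exp (-(4 * s)) / s ^ 2)
          - Real.exp (-r) / 2 * (Real.exp (-(2 * s)) / s ^ 2)) := by
    apply setIntegral_congr_fun measurableSet_Ioi
    intro s hs
    have h0 : (0:ℝ) < s := hr.trans hs
    dsimp only
    rw [Real.sinh_eq]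
    rw [show r - s = r + (-s) by ring, Real.exp_add,
      show -(r + -s) = -r + s by ring, Real.exp_add,
      show -((4:ℝ) * s) = -s + (-3 * s) by ring, Real.exp_add,
      show -((2:ℝ) * s) = s + (-3 * s) by ring, Real.exp_add]
    field_simp
  rw [hcong, integral_sub (i2'.const_mul _) (i2.const_mul _),
    MeasureTheory.integral_const_mul, MeasureTheory.integral_const_mul, E2, E4]
  have h1 : Real.exp r * Real.exp (-(4 * r)) = Real.exp (-r) * Real.exp (-(2 * r)) := by
    rw [← Real.exp_add, ← Real.exp_add]; ring_nf
  field_simp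
  nlinarith [h1]
end

section
/- Fix λ ∈ [0,1] and set σ := √(1−λ). (a) If u₀ : (0,∞) → ℝ is a twice continuously differentiable solution of −u'' − (2/r)·u' + (1 − λ − 3Q²)·u = 0 on (0,∞) such that r·u₀(r) → 0 and (d/dr)(r·u₀(r)) → c as r → 0⁺ for some c ≠ 0, then every twice continuously differentiable solution v of the same equation whose Wronskian u₀·v' − u₀'·v is nonzero at some point of (0,∞) satisfies ∫_0^1 v(r)² dr = ∞. (b) If u∞ is a twice continuously differentiable solution with lim_{r→∞} r·e^{σr}·u∞(r) = 1, then every solution v whose Wronskian u∞·v' − u∞'·v is nonzero at some point satisfies ∫_1^∞ v(r)² dr = ∞. -/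
open Real Set Filter MeasureTheory

section Helpers

lemma sol_derivs {v : ℝ → ℝ} (hv : ContDiffOn ℝ 2 v (Set.Ioi 0)) {r : ℝ} (hr : 0 < r) :
    HasDerivAt v (deriv v r) r ∧ HasDerivAt (deriv v) (deriv (deriv v) r) r := by
  have h1 : DifferentiableOn ℝ v (Ioi 0) := hv.differentiableOn (by norm_num)
  have h2 : ContDiffOn ℝ 1 (deriv v) (Ioi 0) :=
    hv.deriv_of_isOpen isOpen_Ioi (by norm_num)
  have h3 : DifferentiableOn ℝ (deriv v) (Ioi 0) := h2.differentiableOn (by norm_num)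
  exact ⟨(h1.differentiableAt (Ioi_mem_nhds hr)).hasDerivAt,
    (h3.differentiableAt (Ioi_mem_nhds hr)).hasDerivAt⟩

/-- Wronskian identity: `r^2 * W r` is constant on `(0,∞)`. -/
lemma wronskian_const {q u v : ℝ → ℝ}
    (hu : ContDiffOn ℝ 2 u (Set.Ioi 0)) (hv : ContDiffOn ℝ 2 v (Set.Ioi 0))
    (hu' : ∀ r > (0:ℝ), deriv (deriv u) r = q r * u r - (2/r) * deriv u r)
    (hv' : ∀ r > (0:ℝ), deriv (deriv v) r = q r * v r - (2/r) * deriv v r)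
    {r s : ℝ} (hr : 0 < r) (hs : 0 < s) :
    r^2 * (u r * deriv v r - deriv u r * v r) = s^2 * (u s * deriv v s - deriv u s * v s) := by
  set W : ℝ → ℝ := fun t => u t * deriv v t - deriv u t * v t with hW
  have key : ∀ t ∈ Ioi (0:ℝ), HasDerivAt (fun t => t^2 * W t) 0 t := by
    intro t ht
    have ht0 : (0:ℝ) < t := ht
    obtain ⟨hu1, hu2⟩ := sol_derivs hu ht0
    obtain ⟨hv1, hv2⟩ := sol_derivs hv ht0
    have hWd : HasDerivAt W (u t * deriv (deriv v) t - deriv (deriv u) t * v t) t := by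
      have h := (hu1.mul hv2).sub (hu2.mul hv1)
      exact h.congr_deriv (by ring)
    have hid : HasDerivAt (fun t : ℝ => t^2) (2*t) t := by
      simpa using hasDerivAt_pow 2 t
    have h2 := hid.mul hWd
    refine h2.congr_deriv ?_
    rw [hu' t ht0, hv' t ht0]
    simp only [hW]
    field_simp
    ring
  have hconst := (convex_Ioi (0:ℝ)).is_const_of_fderivWithin_eq_zero
    (fun t ht => ((key t ht).differentiableAt.differentiableWithinAt))
    (fun t ht => by
      rw [fderivWithin_of_isOpen isOpen_Ioi ht]
      have h0 : HasFDerivAt (fun t => t^2 * W t)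
          ((ContinuousLinearMap.smulRight (1 : ℝ →L[ℝ] ℝ) (0:ℝ))) t :=
        (key t ht).hasFDerivAt
      rw [h0.fderiv]; ext; simp)
    hr hs
  exact hconst

/-- Quotient-rule step using the Wronskian value. -/
lemma hasDerivAt_ratio {u v : ℝ → ℝ} {K r : ℝ} (hr : 0 < r)
    (hu1 : HasDerivAt u (deriv u r) r) (hv1 : HasDerivAt v (deriv v r) r)
    (hW : r^2 * (u r * deriv v r - deriv u r * v r) = K)
    (hne : u r ≠ 0) :
    HasDerivAt (fun s => v s / u s) (K / (r^2 * (u r)^2)) r := by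
  have h := hv1.div hu1 hne
  refine h.congr_deriv ?_
  rw [div_eq_div_iff (by positivity) (by positivity)]
  linear_combination (u r)^2 * hW

/-- If `g = r * u₀ r → 0` and `g' → c` at `0⁺`, then `u₀` is near `c` on a right
neighbourhood of `0`. -/
lemma limit_at_zero {u₀ : ℝ → ℝ} {c : ℝ}
    (hdiff : ∀ r > (0:ℝ), HasDerivAt (fun r => r * u₀ r) (deriv (fun r => r * u₀ r) r) r)
    (h0 : Tendsto (fun r => r * u₀ r) (nhdsWithin 0 (Set.Ioi 0)) (nhds 0))
    (h1 : Tendsto (deriv fun r => r * u₀ r) (nhdsWithin 0 (Set.Ioi 0)) (nhds c)) :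
    ∀ ε > (0:ℝ), ∃ δ > (0:ℝ), ∀ r ∈ Set.Ioo (0:ℝ) δ, |u₀ r - c| ≤ ε := by
  intro ε hε
  set g : ℝ → ℝ := fun r => r * u₀ r with hg
  have hev : ∀ᶠ s in nhdsWithin 0 (Set.Ioi 0), |deriv g s - c| ≤ ε/2 := by
    have := h1.eventually (Metric.closedBall_mem_nhds c (by positivity : (0:ℝ) < ε/2))
    filter_upwards [this] with s hs
    simpa [Real.dist_eq] using hs
  obtain ⟨δ, hδmem, hδ⟩ := mem_nhdsGT_iff_exists_Ioo_subset.1 hev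
  refine ⟨δ, hδmem, fun r hr => ?_⟩
  have hr0 : 0 < r := hr.1
  have hkey : ∀ t ∈ Ioo (0:ℝ) r, |(g r - c * r) - (g t - c * t)| ≤ (ε/2) * r := by
    intro t ht
    have hsub : Icc t r ⊆ Ioo (0:ℝ) δ := fun x hx =>
      ⟨lt_of_lt_of_le ht.1 hx.1, lt_of_le_of_lt hx.2 hr.2⟩
    have hmvt := Convex.norm_image_sub_le_of_norm_hasDerivWithin_le
      (f := fun s => g s - c * s) (f' := fun s => deriv g s - c) (s := Icc t r) (C := ε/2)
      (fun x hx => (((hdiff x (hsub hx).1).sub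
        ((hasDerivAt_id x).const_mul c)).hasDerivWithinAt).congr_deriv (by ring))
      (fun x hx => by simpa [Real.norm_eq_abs] using hδ (hsub hx))
      (convex_Icc t r) (left_mem_Icc.2 (le_of_lt ht.2)) (right_mem_Icc.2 (le_of_lt ht.2))
    calc |(g r - c * r) - (g t - c * t)| ≤ (ε/2) * |r - t| := by
          simpa [Real.norm_eq_abs] using hmvt
      _ ≤ (ε/2) * r := by
          have : |r - t| ≤ r := by rw [abs_of_nonneg (by linarith [ht.1, ht.2])]; linarith [ht.1]
          nlinarith [hε]
  have hlim : Tendsto (fun t => |(g r - c * r) - (g t - c * t)|) (nhdsWithin 0 (Set.Ioi 0))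
      (nhds |g r - c * r|) := by
    have : Tendsto (fun t : ℝ => (g r - c * r) - (g t - c * t)) (nhdsWithin 0 (Set.Ioi 0))
        (nhds ((g r - c * r) - (0 - c * 0))) :=
      tendsto_const_nhds.sub (h0.sub
        (((continuous_const.mul continuous_id).tendsto 0).mono_left nhdsWithin_le_nhds))
    simpa using this.abs
  have hle : |g r - c * r| ≤ (ε/2) * r := by
    refine le_of_tendsto hlim ?_
    filter_upwards [Ioo_mem_nhdsGT_of_mem
      (by constructor <;> [rfl; exact hr0] : (0:ℝ) ∈ Ico 0 r)] with t ht
    exact hkey t ht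
  have heq : |u₀ r - c| * r = |g r - c * r| := by
    rw [hg, ← abs_of_pos hr0, ← abs_mul]
    rw [abs_of_pos hr0]
    congr 1
    ring
  nlinarith [abs_nonneg (u₀ r - c), heq, hle]

lemma not_L2_zero {v : ℝ → ℝ} (hv : ContinuousOn v (Set.Ioi 0)) {b r₀ : ℝ}
    (hb : 0 < b) (h0 : 0 < r₀) (h1 : r₀ ≤ 1)
    (hlow : ∀ r ∈ Set.Ioo (0:ℝ) r₀, b / r^2 ≤ (v r)^2) :
    ∫⁻ r in Set.Ioo (0:ℝ) 1, ENNReal.ofReal ((v r) ^ 2) = ⊤ := by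
  by_contra h
  have hsub : Set.Ioo (0:ℝ) 1 ⊆ Set.Ioi 0 := fun x hx => hx.1
  have hASM : AEStronglyMeasurable (fun r => (v r)^2) (volume.restrict (Set.Ioo (0:ℝ) 1)) :=
    (((hv.mono hsub).pow 2)).aestronglyMeasurable measurableSet_Ioo
  have hInt : IntegrableOn (fun r => (v r)^2) (Set.Ioo (0:ℝ) 1) := by
    refine ⟨hASM, ?_⟩
    rw [hasFiniteIntegral_iff_norm]
    have : ∀ r : ℝ, ENNReal.ofReal ‖(v r)^2‖ = ENNReal.ofReal ((v r)^2) := fun r => by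
      rw [Real.norm_eq_abs, abs_of_nonneg (sq_nonneg _)]
    simp_rw [this]
    exact lt_top_iff_ne_top.2 h
  have hInt2 : IntegrableOn (fun r => (v r)^2) (Set.Ioo (0:ℝ) r₀) :=
    hInt.mono_set (Set.Ioo_subset_Ioo le_rfl h1)
  have hIntb : IntegrableOn (fun r : ℝ => b * r ^ (-2:ℝ)) (Set.Ioo (0:ℝ) r₀) := by
    refine MeasureTheory.Integrable.mono hInt2 ?_ ?_
    · refine ContinuousOn.aestronglyMeasurable ?_ measurableSet_Ioo
      exact continuousOn_const.mul
        (ContinuousOn.rpow_const continuousOn_id (fun x hx => Or.inl (ne_of_gt hx.1)))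
    · rw [ae_restrict_iff' measurableSet_Ioo]
      refine Filter.Eventually.of_forall fun r hr => ?_
      have hr0 : 0 < r := hr.1
      have hrp : r ^ (-2:ℝ) = (r^2)⁻¹ := by
        rw [show (-2:ℝ) = -((2:ℕ):ℝ) by norm_num, Real.rpow_neg hr0.le, Real.rpow_natCast]
      have h2 : b * r ^ (-2:ℝ) = b / r^2 := by rw [hrp]; ring
      rw [Real.norm_eq_abs, Real.norm_eq_abs, h2, abs_of_nonneg (by positivity),
        abs_of_nonneg (sq_nonneg _)]
      exact hlow r hr
  have hIntc : IntegrableOn (fun r : ℝ => r ^ (-2:ℝ)) (Set.Ioo (0:ℝ) r₀) := by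
    have h2 := hIntb.const_mul b⁻¹
    refine IntegrableOn.congr_fun h2 (fun x hx => ?_) measurableSet_Ioo
    field_simp
  rw [intervalIntegral.integrableOn_Ioo_rpow_iff h0] at hIntc
  norm_num at hIntc

lemma not_L2_infty {v : ℝ → ℝ} (hv : ContinuousOn v (Set.Ioi 0)) {ε R : ℝ}
    (hε : 0 < ε) (hR : 1 ≤ R)
    (hlow : ∀ r ≥ R, ε ≤ (v r)^2) :
    ∫⁻ r in Set.Ioi (1:ℝ), ENNReal.ofReal ((v r) ^ 2) = ⊤ := by
  by_contra h
  have hsub : Set.Ioi (1:ℝ) ⊆ Set.Ioi 0 := fun x hx => show (0:ℝ) < x from lt_trans zero_lt_one hx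
  have hASM : AEStronglyMeasurable (fun r => (v r)^2) (volume.restrict (Set.Ioi (1:ℝ))) :=
    (((hv.mono hsub).pow 2)).aestronglyMeasurable measurableSet_Ioi
  have hInt : IntegrableOn (fun r => (v r)^2) (Set.Ioi (1:ℝ)) := by
    refine ⟨hASM, ?_⟩
    rw [hasFiniteIntegral_iff_norm]
    have : ∀ r : ℝ, ENNReal.ofReal ‖(v r)^2‖ = ENNReal.ofReal ((v r)^2) := fun r => by
      rw [Real.norm_eq_abs, abs_of_nonneg (sq_nonneg _)]
    simp_rw [this]
    exact lt_top_iff_ne_top.2 h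
  have hInt2 : IntegrableOn (fun r => (v r)^2) (Set.Ioi R) :=
    hInt.mono_set (Set.Ioi_subset_Ioi hR)
  have hIntc : IntegrableOn (fun _ : ℝ => ε) (Set.Ioi R) := by
    refine MeasureTheory.Integrable.mono hInt2 aestronglyMeasurable_const ?_
    rw [ae_restrict_iff' measurableSet_Ioi]
    refine Filter.Eventually.of_forall fun r hr => ?_
    rw [Real.norm_eq_abs, Real.norm_eq_abs, abs_of_nonneg hε.le, abs_of_nonneg (sq_nonneg _)]
    exact hlow r (le_of_lt hr)
  rw [integrableOn_const_iff] at hIntc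
  rcases hIntc with h' | h'
  · simp at h'; linarith
  · simp [Real.volume_Ioi] at h'

lemma partA_core {u₀ v : ℝ → ℝ} {K cl δ : ℝ} (hK : 0 < K) (hcl : 0 < cl)
    (hδ : 0 < δ) (hδ1 : δ ≤ 1)
    (hucont : ContinuousOn u₀ (Set.Ioi 0)) (hvcont : ContinuousOn v (Set.Ioi 0))
    (hbound : ∀ r ∈ Set.Ioo (0:ℝ) δ, cl ≤ |u₀ r| ∧ |u₀ r| ≤ 3*cl)
    (hF : ∀ r ∈ Set.Ioo (0:ℝ) δ,
      HasDerivAt (fun s => v s / u₀ s) (K / (r^2 * (u₀ r)^2)) r) :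
    ∫⁻ r in Set.Ioo (0:ℝ) 1, ENNReal.ofReal ((v r) ^ 2) = ⊤ := by
  set F : ℝ → ℝ := fun s => v s / u₀ s with hFdef
  clear_value F
  set d : ℝ := δ/2 with hd
  have hd0 : 0 < d := by positivity
  have hdδ : d < δ := by simp [hd]; linarith
  have hdmem : d ∈ Set.Ioo (0:ℝ) δ := ⟨hd0, hdδ⟩
  set a : ℝ := K / (9 * cl^2) with ha
  have ha0 : 0 < a := by positivity
  -- key estimate : F r ≤ B - a / r  for r ∈ Ioo 0 d
  set B : ℝ := F d + a / d with hB
  clear_value B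
  have hkey : ∀ r ∈ Set.Ioo (0:ℝ) d, F r ≤ B - a / r := by
    intro r hr
    have hr0 : 0 < r := hr.1
    have hrd : r < d := hr.2
    have hsub : Set.Icc r d ⊆ Set.Ioo 0 δ := fun x hx =>
      ⟨lt_of_lt_of_le hr0 hx.1, lt_of_le_of_lt hx.2 hdδ⟩
    have hne : ∀ x ∈ Set.Icc r d, x^2 * (u₀ x)^2 ≠ 0 := by
      intro x hx
      have h1 := (hbound x (hsub hx)).1
      have hx0 : 0 < x := lt_of_lt_of_le hr0 hx.1
      have : u₀ x ≠ 0 := fun h => by simp [h] at h1; linarith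
      positivity
    -- FTC
    have hftc : ∫ x in r..d, K / (x^2 * (u₀ x)^2) = F d - F r := by
      refine intervalIntegral.integral_eq_sub_of_hasDerivAt (fun x hx => ?_) ?_
      · rw [uIcc_of_le hrd.le] at hx
        exact hF x (hsub hx)
      · apply ContinuousOn.intervalIntegrable
        rw [uIcc_of_le hrd.le]
        refine continuousOn_const.div ?_ hne
        refine ContinuousOn.mul (by fun_prop) ?_
        exact ((hucont.mono (fun x hx => (hsub hx).1 : Set.Icc r d ⊆ Set.Ioi 0)).pow 2)
    -- lower bound of the integral
    have hcmp : ∫ x in r..d, a / x^2 ≤ ∫ x in r..d, K / (x^2 * (u₀ x)^2) := by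
      refine intervalIntegral.integral_mono_on hrd.le ?_ ?_ ?_
      · apply ContinuousOn.intervalIntegrable
        rw [uIcc_of_le hrd.le]
        refine continuousOn_const.div (by fun_prop) ?_
        intro x hx
        have hx0 : 0 < x := lt_of_lt_of_le hr0 hx.1
        positivity
      · apply ContinuousOn.intervalIntegrable
        rw [uIcc_of_le hrd.le]
        refine continuousOn_const.div ?_ hne
        refine ContinuousOn.mul (by fun_prop) ?_
        exact ((hucont.mono (fun x hx => (hsub hx).1 : Set.Icc r d ⊆ Set.Ioi 0)).pow 2)
      · intro x hx
        have hx0 : 0 < x := lt_of_lt_of_le hr0 hx.1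
        have hb1 := (hbound x (hsub hx)).1
        have hb2 := (hbound x (hsub hx)).2
        have hu2 : (u₀ x)^2 ≤ 9*cl^2 := by
          have := sq_abs (u₀ x)
          nlinarith
        have hu0 : u₀ x ≠ 0 := fun h => by rw [h] at hb1; simp at hb1; linarith
        have hu2' : 0 < (u₀ x)^2 := by positivity
        rw [ha, div_div, div_le_div_iff₀ (by positivity) (by positivity)]
        nlinarith [mul_le_mul_of_nonneg_left hu2 (by positivity : (0:ℝ) ≤ K * x^2)]
    have hint : ∫ x in r..d, a / x^2 = a / r - a / d := by
      have : ∀ x ∈ Set.uIcc r d, HasDerivAt (fun y : ℝ => -(a / y)) (a / x^2) x := by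
        intro x hx
        rw [uIcc_of_le hrd.le] at hx
        have hx0 : 0 < x := lt_of_lt_of_le hr0 hx.1
        have h1 : HasDerivAt (fun y : ℝ => y⁻¹) (-(x^2)⁻¹) x := by
          simpa using hasDerivAt_inv (ne_of_gt hx0)
        have h2 := (h1.const_mul a).neg
        have h3 : (fun y : ℝ => -(a / y)) = fun y => -(a * y⁻¹) := by
          funext y; rw [div_eq_mul_inv]
        rw [h3]; exact h2.congr_deriv (by ring)

      rw [intervalIntegral.integral_eq_sub_of_hasDerivAt this ?_]
      · ring
      · apply ContinuousOn.intervalIntegrable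
        rw [uIcc_of_le hrd.le]
        refine continuousOn_const.div (by fun_prop) ?_
        intro x hx
        have hx0 : 0 < x := lt_of_lt_of_le hr0 hx.1
        positivity
    rw [hint, hftc] at hcmp
    rw [hB]
    linarith
  -- choose r₀
  set r₀ : ℝ := min d (a / (2 * (|B| + 1))) with hr₀
  have hr₀0 : 0 < r₀ := lt_min hd0 (by positivity)
  have hr₀1 : r₀ ≤ 1 := le_trans (min_le_left _ _) (by linarith)
  set b : ℝ := a^2 * cl^2 / 4 with hbdef
  have hb0 : 0 < b := by positivity
  refine not_L2_zero hvcont hb0 hr₀0 hr₀1 ?_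
  intro r hr
  have hr0 : 0 < r := hr.1
  have hrd : r < d := lt_of_lt_of_le hr.2 (min_le_left _ _)
  have hrmem : r ∈ Set.Ioo (0:ℝ) d := ⟨hr0, hrd⟩
  have hFr := hkey r hrmem
  have hra : r < a / (2 * (|B| + 1)) := lt_of_lt_of_le hr.2 (min_le_right _ _)
  have har : 2 * (|B| + 1) ≤ a / r := by
    rw [le_div_iff₀ hr0]
    rw [lt_div_iff₀ (by positivity)] at hra
    linarith
  have hFneg : F r ≤ -(a / (2 * r)) := by
    have h1 : F r ≤ B - a / r := hFr
    have h2 : B ≤ |B| := le_abs_self B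
    have h3 : a / r = 2 * (a / (2*r)) := by field_simp
    have h4 : (|B| + 1) ≤ a / (2*r) := by
      rw [h3] at har; linarith
    linarith
  have habs : a / (2*r) ≤ |F r| :=
    le_trans (by linarith : a / (2*r) ≤ -(F r)) (neg_le_abs (F r))
  have hu0 : u₀ r ≠ 0 := by
    have h1 := (hbound r ⟨hr0, lt_trans hrd hdδ⟩).1
    intro h; rw [h] at h1; simp at h1; linarith
  have hveq : v r = F r * u₀ r := by
    rw [hFdef]; field_simp
  have hvabs : a / (2*r) * cl ≤ |v r| := by
    rw [hveq, abs_mul]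
    have h1 := (hbound r ⟨hr0, lt_trans hrd hdδ⟩).1
    calc a / (2*r) * cl ≤ |F r| * cl := by
          apply mul_le_mul_of_nonneg_right habs hcl.le
      _ ≤ |F r| * |u₀ r| := by
          apply mul_le_mul_of_nonneg_left h1 (abs_nonneg _)
  have : b / r^2 ≤ (v r)^2 := by
    rw [← sq_abs (v r)]
    have h5 : (a / (2*r) * cl)^2 ≤ |v r|^2 := by
      apply sq_le_sq' _ hvabs
      have : 0 ≤ a / (2*r) * cl := by positivity
      nlinarith [abs_nonneg (v r)]
    calc b / r^2 = (a / (2*r) * cl)^2 := by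
          rw [hbdef]; field_simp; ring
      _ ≤ |v r|^2 := h5
  exact this

lemma partB_core {uI v : ℝ → ℝ} {K σ R : ℝ} (hK : 0 < K) (hσ0 : 0 ≤ σ) (hR : 1 ≤ R)
    (hvcont : ContinuousOn v (Set.Ioi 0))
    (hbound : ∀ r ≥ R, 1/2 ≤ r * Real.exp (σ*r) * uI r ∧ r * Real.exp (σ*r) * uI r ≤ 3/2)
    (hucont : ContinuousOn uI (Set.Ici R))
    (hF : ∀ r ≥ R, HasDerivAt (fun s => v s / uI s) (K / (r^2 * (uI r)^2)) r) :
    ∫⁻ r in Set.Ioi (1:ℝ), ENNReal.ofReal ((v r) ^ 2) = ⊤ := by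
  set F : ℝ → ℝ := fun s => v s / uI s with hFdef
  clear_value F
  have hR0 : (0:ℝ) < R := lt_of_lt_of_le zero_lt_one hR
  -- basic facts for r ≥ R
  have hfacts : ∀ r ≥ R, 0 < uI r ∧ 1 / (2 * (r * Real.exp (σ*r))) ≤ uI r ∧
      (r * uI r)^2 ≤ (3/2 * Real.exp (-(σ*r)))^2 := by
    intro r hr
    have hr0 : 0 < r := lt_of_lt_of_le hR0 hr
    obtain ⟨h1, h2⟩ := hbound r hr
    have he : 0 < Real.exp (σ*r) := Real.exp_pos _
    have ht : 0 < r * Real.exp (σ*r) := by positivity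
    have hu0 : 0 < uI r := by nlinarith
    refine ⟨hu0, ?_, ?_⟩
    · rw [div_le_iff₀ (by positivity)]; nlinarith
    · have hru : r * uI r ≤ 3/2 * Real.exp (-(σ*r)) := by
        have hen : 0 < Real.exp (-(σ*r)) := Real.exp_pos _
        have h2' : (r * uI r) * Real.exp (σ*r) ≤ 3/2 := by nlinarith
        calc r * uI r = (r * uI r) * Real.exp (σ*r) * Real.exp (-(σ*r)) := by
              rw [mul_assoc, ← Real.exp_add]; simp
          _ ≤ 3/2 * Real.exp (-(σ*r)) := by nlinarith
      have hru0 : 0 ≤ r * uI r := by positivity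
      nlinarith
  -- derivative lower bound and FTC
  set C : ℝ := F R - (4*K/9) * (R * Real.exp (σ*R)) with hC
  clear_value C
  have hkey : ∀ r ≥ R, C + (4*K/9) * (r * Real.exp (σ*r)) ≤ F r := by
    intro r hr
    rcases eq_or_lt_of_le hr with rfl | hrR
    · simp [hC]
    have hsub : Set.Icc R r ⊆ Set.Ici R := fun x hx => hx.1
    have hftc : ∫ x in R..r, K / (x^2 * (uI x)^2) = F r - F R := by
      refine intervalIntegral.integral_eq_sub_of_hasDerivAt (fun x hx => ?_) ?_
      · rw [uIcc_of_le hr] at hx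
        exact hF x hx.1
      · apply ContinuousOn.intervalIntegrable
        rw [uIcc_of_le hr]
        refine continuousOn_const.div ?_ ?_
        · exact ContinuousOn.mul (by fun_prop) ((hucont.mono hsub).pow 2)
        · intro x hx
          have hx0 : 0 < x := lt_of_lt_of_le hR0 hx.1
          have := (hfacts x hx.1).1
          positivity
    have hanti : ∫ x in R..r, (4*K/9) * (Real.exp (σ*x) * (1 + σ*x))
        = (4*K/9) * (r * Real.exp (σ*r)) - (4*K/9) * (R * Real.exp (σ*R)) := by
      have hder : ∀ x ∈ Set.uIcc R r,
          HasDerivAt (fun y : ℝ => (4*K/9) * (y * Real.exp (σ*y)))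
            ((4*K/9) * (Real.exp (σ*x) * (1 + σ*x))) x := by
        intro x _
        have h1 : HasDerivAt (fun y : ℝ => Real.exp (σ*y)) (Real.exp (σ*x) * σ) x := by
          have := (Real.hasDerivAt_exp (σ*x)).comp x ((hasDerivAt_id x).const_mul σ)
          exact this.congr_deriv (by ring)
        have h2 := ((hasDerivAt_id x).mul h1).const_mul ((4:ℝ)*K/9)
        exact h2.congr_deriv (by simp only [id_eq, one_mul]; ring)
      rw [intervalIntegral.integral_eq_sub_of_hasDerivAt hder ?_]
      · apply ContinuousOn.intervalIntegrable
        fun_prop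
    have hcmp : ∫ x in R..r, (4*K/9) * (Real.exp (σ*x) * (1 + σ*x))
        ≤ ∫ x in R..r, K / (x^2 * (uI x)^2) := by
      refine intervalIntegral.integral_mono_on hr ?_ ?_ ?_
      · apply ContinuousOn.intervalIntegrable; fun_prop
      · apply ContinuousOn.intervalIntegrable
        rw [uIcc_of_le hr]
        refine continuousOn_const.div ?_ ?_
        · exact ContinuousOn.mul (by fun_prop) ((hucont.mono hsub).pow 2)
        · intro x hx
          have hx0 : 0 < x := lt_of_lt_of_le hR0 hx.1
          have := (hfacts x hx.1).1
          positivity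
      · intro x hx
        have hx0 : 0 < x := lt_of_lt_of_le hR0 hx.1
        obtain ⟨hu0, hul, huu⟩ := hfacts x hx.1
        have hx2 : x^2 * (uI x)^2 = (x * uI x)^2 := by ring
        have hpos : 0 < (x * uI x)^2 := by positivity
        have he : 0 < Real.exp (σ*x) := Real.exp_pos _
        -- K / (x uI)^2 ≥ (4K/9) e^{2σx} ≥ (4K/9) e^{σx}(1+σx)
        have hstep1 : (4*K/9) * (Real.exp (σ*x))^2 ≤ K / (x^2 * (uI x)^2) := by
          rw [hx2, le_div_iff₀ hpos]
          have h9 : (x * uI x)^2 ≤ (3/2)^2 * (Real.exp (-(σ*x)))^2 := by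
            have := huu; nlinarith
          have hee : (Real.exp (-(σ*x)))^2 * (Real.exp (σ*x))^2 = 1 := by
            rw [← mul_pow, ← Real.exp_add]
            simp
          have hm := mul_le_mul_of_nonneg_left h9
            (by positivity : (0:ℝ) ≤ 4*K/9 * (Real.exp (σ*x))^2)
          have hfin : 4*K/9 * (Real.exp (σ*x))^2 * ((3/2)^2 * (Real.exp (-(σ*x)))^2) = K := by
            linear_combination K * hee
          linarith
        have hstep2 : (4*K/9) * (Real.exp (σ*x) * (1 + σ*x))
            ≤ (4*K/9) * (Real.exp (σ*x))^2 := by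
          have h1 : 1 + σ*x ≤ Real.exp (σ*x) := by
            have := Real.add_one_le_exp (σ*x); linarith
          have hm2 := mul_le_mul_of_nonneg_left h1
            (by positivity : (0:ℝ) ≤ 4*K/9 * Real.exp (σ*x))
          nlinarith [hm2]
        linarith
    rw [hftc, hanti] at hcmp
    rw [hC]
    linarith
  -- choose R₂ and conclude
  set R₂ : ℝ := max R (9 * (|C| + 1) / (2*K)) with hR₂
  have hR₂R : R ≤ R₂ := le_max_left _ _
  have hR₂1 : 1 ≤ R₂ := le_trans hR hR₂R
  have hlow : ∀ r ≥ R₂, (K/9)^2 ≤ (v r)^2 := by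
    intro r hr
    have hrR : R ≤ r := le_trans hR₂R hr
    have hr0 : 0 < r := lt_of_lt_of_le hR0 hrR
    have he1 : 1 ≤ Real.exp (σ*r) := by
      rw [Real.one_le_exp_iff]; positivity
    have hre : r ≤ r * Real.exp (σ*r) := by nlinarith
    have hr2 : 9 * (|C| + 1) / (2*K) ≤ r := le_trans (le_max_right _ _) hr
    have hC1 : |C| + 1 ≤ (2*K/9) * r := by
      rw [div_le_iff₀ (by positivity)] at hr2
      linarith
    have hFr := hkey r hrR
    have hFlow : (2*K/9) * (r * Real.exp (σ*r)) ≤ F r := by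
      have h1 : -C ≤ |C| := neg_le_abs C
      have h2 : (2*K/9) * r ≤ (2*K/9) * (r * Real.exp (σ*r)) := by nlinarith
      linarith
    obtain ⟨hu0, hul, _⟩ := hfacts r hrR
    have hF0 : 0 ≤ F r := le_trans (by positivity) hFlow
    have hveq : v r = F r * uI r := by
      rw [hFdef]; field_simp
    have hvlow : K/9 ≤ v r := by
      rw [hveq]
      have hm : (2*K/9) * (r * Real.exp (σ*r)) * (1 / (2 * (r * Real.exp (σ*r)))) ≤ F r * uI r := by
        apply mul_le_mul hFlow hul (by positivity) hF0
      calc K/9 = (2*K/9) * (r * Real.exp (σ*r)) * (1 / (2 * (r * Real.exp (σ*r)))) := by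
            field_simp
        _ ≤ F r * uI r := hm
    have h0 : 0 ≤ K/9 := by positivity
    exact pow_le_pow_left₀ h0 hvlow 2
  exact not_L2_infty hvcont (by positivity : (0:ℝ) < (K/9)^2) hR₂1 hlow


/-- Negation transfers the ODE. -/
lemma neg_ode {v q : ℝ → ℝ}
    (h : ∀ r > (0:ℝ), -(deriv (deriv v) r) - (2 / r) * deriv v r + q r * v r = 0) :
    ∀ r > (0:ℝ), -(deriv (deriv (fun s => -v s)) r) - (2 / r) * deriv (fun s => -v s) r
      + q r * (fun s => -v s) r = 0 := by
  have hd : deriv (fun s => -v s) = fun s => -deriv v s := funext fun s => deriv.neg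
  intro r hr
  have h2 : deriv (deriv (fun s => -v s)) r = -(deriv (deriv v) r) := by
    rw [hd]
    exact deriv.neg
  rw [h2, hd]
  have := h r hr
  simp only
  linarith

section Parts

variable {q u₀ v : ℝ → ℝ}

lemma partA_full {c : ℝ} (hc : c ≠ 0)
    (hu : ContDiffOn ℝ 2 u₀ (Set.Ioi 0)) (hv : ContDiffOn ℝ 2 v (Set.Ioi 0))
    (hu' : ∀ r > (0:ℝ), deriv (deriv u₀) r = q r * u₀ r - (2/r) * deriv u₀ r)
    (hv' : ∀ r > (0:ℝ), deriv (deriv v) r = q r * v r - (2/r) * deriv v r)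
    (hlim0 : Tendsto (fun r => r * u₀ r) (nhdsWithin 0 (Set.Ioi 0)) (nhds 0))
    (hlim1 : Tendsto (deriv fun r => r * u₀ r) (nhdsWithin 0 (Set.Ioi 0)) (nhds c))
    {r₁ : ℝ} (hr₁ : 0 < r₁)
    (hWpos : 0 < r₁^2 * (u₀ r₁ * deriv v r₁ - deriv u₀ r₁ * v r₁)) :
    ∫⁻ r in Set.Ioo (0:ℝ) 1, ENNReal.ofReal ((v r) ^ 2) = ⊤ := by
  set K : ℝ := r₁^2 * (u₀ r₁ * deriv v r₁ - deriv u₀ r₁ * v r₁) with hKdef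
  have hWc : ∀ r > (0:ℝ), r^2 * (u₀ r * deriv v r - deriv u₀ r * v r) = K :=
    fun r hr => wronskian_const hu hv hu' hv' hr hr₁
  have hcabs : 0 < |c| := abs_pos.2 hc
  have hdiff : ∀ r > (0:ℝ), HasDerivAt (fun s => s * u₀ s) (deriv (fun s => s * u₀ s) r) r := by
    intro r hr
    have h1 : DifferentiableAt ℝ u₀ r :=
      (hu.differentiableOn (by norm_num)).differentiableAt (Ioi_mem_nhds hr)
    exact (differentiableAt_id.mul h1).hasDerivAt
  obtain ⟨δ₁, hδ₁0, hδ₁⟩ := limit_at_zero hdiff hlim0 hlim1 (|c|/2) (by positivity)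
  set δ : ℝ := min δ₁ 1 with hδdef
  have hδ0 : 0 < δ := lt_min hδ₁0 zero_lt_one
  have hδ1 : δ ≤ 1 := min_le_right _ _
  have hbound : ∀ r ∈ Set.Ioo (0:ℝ) δ, |c|/2 ≤ |u₀ r| ∧ |u₀ r| ≤ 3*(|c|/2) := by
    intro r hr
    have h := hδ₁ r ⟨hr.1, lt_of_lt_of_le hr.2 (min_le_left _ _)⟩
    have t1 : |c| - |u₀ r| ≤ |c - u₀ r| := abs_sub_abs_le_abs_sub c (u₀ r)
    have t2 : |u₀ r| - |c| ≤ |u₀ r - c| := abs_sub_abs_le_abs_sub (u₀ r) c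
    rw [abs_sub_comm] at t1
    constructor <;> linarith
  have hne : ∀ r ∈ Set.Ioo (0:ℝ) δ, u₀ r ≠ 0 := by
    intro r hr h
    have := (hbound r hr).1
    rw [h] at this; simp at this; linarith
  have hF : ∀ r ∈ Set.Ioo (0:ℝ) δ,
      HasDerivAt (fun s => v s / u₀ s) (K / (r^2 * (u₀ r)^2)) r := by
    intro r hr
    exact hasDerivAt_ratio hr.1 (sol_derivs hu hr.1).1 (sol_derivs hv hr.1).1
      (hWc r hr.1) (hne r hr)
  exact partA_core hWpos (by positivity : (0:ℝ) < |c|/2) hδ0 hδ1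
    hu.continuousOn hv.continuousOn hbound hF

lemma partB_full {uI : ℝ → ℝ} {σ : ℝ} (hσ0 : 0 ≤ σ)
    (hu : ContDiffOn ℝ 2 uI (Set.Ioi 0)) (hv : ContDiffOn ℝ 2 v (Set.Ioi 0))
    (hu' : ∀ r > (0:ℝ), deriv (deriv uI) r = q r * uI r - (2/r) * deriv uI r)
    (hv' : ∀ r > (0:ℝ), deriv (deriv v) r = q r * v r - (2/r) * deriv v r)
    (htend : Tendsto (fun r => r * Real.exp (σ * r) * uI r) atTop (nhds 1))
    {r₁ : ℝ} (hr₁ : 0 < r₁)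
    (hWpos : 0 < r₁^2 * (uI r₁ * deriv v r₁ - deriv uI r₁ * v r₁)) :
    ∫⁻ r in Set.Ioi (1:ℝ), ENNReal.ofReal ((v r) ^ 2) = ⊤ := by
  set K : ℝ := r₁^2 * (uI r₁ * deriv v r₁ - deriv uI r₁ * v r₁) with hKdef
  have hWc : ∀ r > (0:ℝ), r^2 * (uI r * deriv v r - deriv uI r * v r) = K :=
    fun r hr => wronskian_const hu hv hu' hv' hr hr₁
  obtain ⟨N, hN⟩ := Metric.tendsto_atTop.1 htend (1/2) (by norm_num)
  set R : ℝ := max N 1 with hRdef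
  have hR1 : (1:ℝ) ≤ R := le_max_right _ _
  have hR0 : (0:ℝ) < R := lt_of_lt_of_le zero_lt_one hR1
  have hbound : ∀ r ≥ R, 1/2 ≤ r * Real.exp (σ*r) * uI r ∧ r * Real.exp (σ*r) * uI r ≤ 3/2 := by
    intro r hr
    have := hN r (le_trans (le_max_left _ _) hr)
    rw [Real.dist_eq, abs_lt] at this
    constructor <;> linarith [this.1, this.2]
  have hsub : Set.Ici R ⊆ Set.Ioi (0:ℝ) := fun x hx => lt_of_lt_of_le hR0 hx
  have hne : ∀ r ≥ R, uI r ≠ 0 := by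
    intro r hr h
    have h1 := (hbound r hr).1
    rw [h] at h1; simp at h1; linarith
  have hF : ∀ r ≥ R, HasDerivAt (fun s => v s / uI s) (K / (r^2 * (uI r)^2)) r := by
    intro r hr
    have hr0 : 0 < r := lt_of_lt_of_le hR0 hr
    exact hasDerivAt_ratio hr0 (sol_derivs hu hr0).1 (sol_derivs hv hr0).1
      (hWc r hr0) (hne r hr)
  exact partB_core hWpos hσ0 hR1 hv.continuousOn hbound (hu.continuousOn.mono hsub) hF

end Parts

/-- Non-`L²` behaviour of solutions of `L₊ u = λ u` which are linearly independent of the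
distinguished solutions: (a) any solution `v` whose Wronskian with the solution `u₀`
regular at the origin does not vanish fails to be square integrable near `0`; (b) any
solution `v` whose Wronskian with the decaying solution `u∞` does not vanish fails to be
square integrable near `∞`. -/
theorem L_plus_independent_solutions_not_L2
    (Q : ℝ → ℝ)
    (hQreg : ContDiffOn ℝ 2 Q (Set.Ioi 0))
    (hQpos : ∀ r > (0:ℝ), 0 < Q r)
    (hQode : ∀ r > (0:ℝ), -(deriv (deriv Q) r) - (2 / r) * deriv Q r + Q r - (Q r) ^ 3 = 0)
    (hQbdd : ∃ C : ℝ, ∀ r ∈ Set.Ioc (0:ℝ) 1, |Q r| ≤ C)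
    (hQlim : Filter.Tendsto Q Filter.atTop (nhds 0))
    (lam : ℝ) (hlam : lam ∈ Set.Icc (0:ℝ) 1)
    (σ : ℝ) (hσ : σ = Real.sqrt (1 - lam)) :
    (∀ u₀ v : ℝ → ℝ, ∀ c : ℝ, c ≠ 0 →
      ContDiffOn ℝ 2 u₀ (Set.Ioi 0) →
      (∀ r > (0:ℝ),
        -(deriv (deriv u₀) r) - (2 / r) * deriv u₀ r + (1 - lam - 3 * (Q r) ^ 2) * u₀ r = 0) →
      Filter.Tendsto (fun r => r * u₀ r) (nhdsWithin 0 (Set.Ioi 0)) (nhds 0) →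
      Filter.Tendsto (deriv fun r => r * u₀ r) (nhdsWithin 0 (Set.Ioi 0)) (nhds c) →
      ContDiffOn ℝ 2 v (Set.Ioi 0) →
      (∀ r > (0:ℝ),
        -(deriv (deriv v) r) - (2 / r) * deriv v r + (1 - lam - 3 * (Q r) ^ 2) * v r = 0) →
      (∃ r > (0:ℝ), u₀ r * deriv v r - deriv u₀ r * v r ≠ 0) →
      ∫⁻ r in Set.Ioo (0:ℝ) 1, ENNReal.ofReal ((v r) ^ 2) = ⊤) ∧
    (∀ uInf v : ℝ → ℝ,
      ContDiffOn ℝ 2 uInf (Set.Ioi 0) →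
      (∀ r > (0:ℝ),
        -(deriv (deriv uInf) r) - (2 / r) * deriv uInf r
          + (1 - lam - 3 * (Q r) ^ 2) * uInf r = 0) →
      Filter.Tendsto (fun r => r * Real.exp (σ * r) * uInf r) Filter.atTop (nhds 1) →
      ContDiffOn ℝ 2 v (Set.Ioi 0) →
      (∀ r > (0:ℝ),
        -(deriv (deriv v) r) - (2 / r) * deriv v r + (1 - lam - 3 * (Q r) ^ 2) * v r = 0) →
      (∃ r > (0:ℝ), uInf r * deriv v r - deriv uInf r * v r ≠ 0) →
      ∫⁻ r in Set.Ioi (1:ℝ), ENNReal.ofReal ((v r) ^ 2) = ⊤) := by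
  have hσ0 : 0 ≤ σ := hσ ▸ Real.sqrt_nonneg _
  constructor
  · intro u₀ v c hc hu hode hlim0 hlim1 hv hvode hex
    obtain ⟨r₁, hr₁, hW₁⟩ := hex
    have hu' : ∀ r > (0:ℝ),
        deriv (deriv u₀) r = (1 - lam - 3*(Q r)^2) * u₀ r - (2/r) * deriv u₀ r := by
      intro r hr; have := hode r hr; linarith
    have hv' : ∀ r > (0:ℝ),
        deriv (deriv v) r = (1 - lam - 3*(Q r)^2) * v r - (2/r) * deriv v r := by
      intro r hr; have := hvode r hr; linarith
    rcases lt_or_gt_of_ne hW₁ with hneg | hpos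
    · -- W < 0 : apply to -v
      have hdneg : deriv (fun s => -v s) = fun s => -deriv v s := funext fun s => deriv.neg
      have hv2' : ∀ r > (0:ℝ), deriv (deriv (fun s => -v s)) r
          = (1 - lam - 3*(Q r)^2) * (fun s => -v s) r - (2/r) * deriv (fun s => -v s) r := by
        intro r hr
        rw [hdneg]
        simp only [deriv.fun_neg]
        rw [hv' r hr]
        ring
      have hWpos2 : 0 < r₁^2 * (u₀ r₁ * deriv (fun s => -v s) r₁
          - deriv u₀ r₁ * (fun s => -v s) r₁) := by
        rw [hdneg]
        simp only
        nlinarith [pow_pos hr₁ 2]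
      have h := partA_full (q := fun r => 1 - lam - 3*(Q r)^2) hc hu hv.neg hu'
        hv2' hlim0 hlim1 hr₁ hWpos2
      simpa using h
    · have hWpos : 0 < r₁^2 * (u₀ r₁ * deriv v r₁ - deriv u₀ r₁ * v r₁) := by
        nlinarith [pow_pos hr₁ 2]
      exact partA_full (q := fun r => 1 - lam - 3*(Q r)^2) hc hu hv hu' hv'
        hlim0 hlim1 hr₁ hWpos
  · intro uInf v hu hode htend hv hvode hex
    obtain ⟨r₁, hr₁, hW₁⟩ := hex
    have hu' : ∀ r > (0:ℝ),
        deriv (deriv uInf) r = (1 - lam - 3*(Q r)^2) * uInf r - (2/r) * deriv uInf r := by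
      intro r hr; have := hode r hr; linarith
    have hv' : ∀ r > (0:ℝ),
        deriv (deriv v) r = (1 - lam - 3*(Q r)^2) * v r - (2/r) * deriv v r := by
      intro r hr; have := hvode r hr; linarith
    rcases lt_or_gt_of_ne hW₁ with hneg | hpos
    · have hdneg : deriv (fun s => -v s) = fun s => -deriv v s := funext fun s => deriv.neg
      have hv2' : ∀ r > (0:ℝ), deriv (deriv (fun s => -v s)) r
          = (1 - lam - 3*(Q r)^2) * (fun s => -v s) r - (2/r) * deriv (fun s => -v s) r := by
        intro r hr
        rw [hdneg]
        simp only [deriv.fun_neg]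
        rw [hv' r hr]
        ring
      have hWpos2 : 0 < r₁^2 * (uInf r₁ * deriv (fun s => -v s) r₁
          - deriv uInf r₁ * (fun s => -v s) r₁) := by
        rw [hdneg]
        simp only
        nlinarith [pow_pos hr₁ 2]
      have h := partB_full (q := fun r => 1 - lam - 3*(Q r)^2) hσ0 hu hv.neg hu'
        hv2' htend hr₁ hWpos2
      simpa using h
    · have hWpos : 0 < r₁^2 * (uInf r₁ * deriv v r₁ - deriv uInf r₁ * v r₁) := by
        nlinarith [pow_pos hr₁ 2]
      exact partB_full (q := fun r => 1 - lam - 3*(Q r)^2) hσ0 hu hv hu' hv'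
        htend hr₁ hWpos
end Helpers
end
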